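/- arXiv:1803.01055 — 5 statements merged into one kernel-verified Lean document; each statement's English description precedes it below -/
import Mathlib

section
/- For every non-negative integer k, every k-11-representable simple graph is also (k+1)-11-representable; that is, the class of k-11-representable graphs is contained in the class of (k+1)-11-representable graphs. -/
/-- Number of occurrences of the consecutive pattern 11 in a word,
i.e. the number of positions `i` with `u i = u (i+1)`. -/
def pattern11Count {V : Type*} [DecidableEq V] (u : List V) : ℕ :=
  (u.zip u.tail).countP (fun p => decide (p.1 = p.2))

/-- `w` is a `k`-11-representant of the simple graph `G`: every vertex occurs in `w`,
and two distinct vertices are adjacent iff the subword of `w` induced by them contains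
at most `k` occurrences of the consecutive pattern 11. -/
def IsK11Rep {V : Type*} [DecidableEq V] (G : SimpleGraph V) (k : ℕ) (w : List V) : Prop :=
  (∀ v : V, v ∈ w) ∧
  ∀ x y : V, x ≠ y →
    (G.Adj x y ↔ pattern11Count (w.filter (fun a => decide (a = x ∨ a = y))) ≤ k)

/-- A simple graph is `k`-11-representable if it has a `k`-11-representant. -/
def K11Representable {V : Type*} [DecidableEq V] (G : SimpleGraph V) (k : ℕ) : Prop :=
  ∃ w : List V, IsK11Rep G k w

/-- A graph is `t`-uniformly `k`-11-representable if it has a `k`-11-representant in which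
every vertex occurs exactly `t` times. -/
def UniformK11Rep {V : Type*} [DecidableEq V] (G : SimpleGraph V) (t k : ℕ) : Prop :=
  ∃ w : List V, IsK11Rep G k w ∧ ∀ v : V, w.count v = t

/-- The final permutation `σ(w)`: distinct letters of `w` in order of last occurrence. -/
def finalPerm {V : Type*} [DecidableEq V] (w : List V) : List V := w.dedup

/-- The initial permutation `π(w)`: distinct letters of `w` in order of first occurrence. -/
def initPerm {V : Type*} [DecidableEq V] (w : List V) : List V := (w.reverse.dedup).reverse

lemma p11_cons_cons {V : Type*} [DecidableEq V] (a b : V) (l : List V) :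
    pattern11Count (a :: b :: l) = pattern11Count (b :: l) + (if a = b then 1 else 0) := by
  simp [pattern11Count, List.countP_cons]

lemma p11_concat {V : Type*} [DecidableEq V] : ∀ (u : List V) (c : V),
    pattern11Count (u ++ [c]) = pattern11Count u + (if u.getLast? = some c then 1 else 0)
  | [], c => by simp [pattern11Count]
  | [a], c => by simp [pattern11Count, List.countP_cons]
  | a :: b :: t, c => by
    have ih := p11_concat (b :: t) c
    simp only [List.cons_append] at *
    rw [p11_cons_cons, p11_cons_cons, ih, List.getLast?_cons_cons]
    omega

lemma filter_dedup' {V : Type*} [DecidableEq V] (p : V → Bool) : ∀ l : List V,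
    (l.dedup).filter p = (l.filter p).dedup
  | [] => rfl
  | a :: t => by
    by_cases h : a ∈ t
    · rw [List.dedup_cons_of_mem h]
      by_cases hp : p a
      · rw [List.filter_cons_of_pos hp, List.dedup_cons_of_mem (List.mem_filter.2 ⟨h, hp⟩)]
        exact filter_dedup' p t
      · rw [List.filter_cons_of_neg (by simpa using hp)]; exact filter_dedup' p t
    · rw [List.dedup_cons_of_notMem h]
      by_cases hp : p a
      · rw [List.filter_cons_of_pos hp, List.filter_cons_of_pos hp,
          List.dedup_cons_of_notMem (fun hc => h (List.mem_filter.1 hc).1), filter_dedup' p t]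
      · rw [List.filter_cons_of_neg (by simpa using hp), List.filter_cons_of_neg (by simpa using hp)]
        exact filter_dedup' p t


lemma dedup_const {V : Type*} [DecidableEq V] (d : V) : ∀ t : List V, t ≠ [] →
    (∀ a ∈ t, a = d) → t.dedup = [d]
  | [], h, _ => absurd rfl h
  | [a], _, hall => by simp [hall a (by simp)]
  | a :: b :: t, _, hall => by
    have ha : a = d := hall a (by simp)
    have hb : b = d := hall b (by simp)
    have hmem : a ∈ b :: t := by rw [ha, ← hb]; simp
    rw [List.dedup_cons_of_mem hmem]
    exact dedup_const d (b :: t) (by simp) (fun x hx => hall x (List.mem_cons_of_mem _ hx))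

lemma getLast?_const {V : Type*} (d : V) : ∀ t : List V, t ≠ [] →
    (∀ a ∈ t, a = d) → t.getLast? = some d
  | [], h, _ => absurd rfl h
  | [a], _, hall => by simp [hall a (by simp)]
  | a :: b :: t, _, hall => by
    rw [List.getLast?_cons_cons]
    exact getLast?_const d (b :: t) (by simp) (fun c hc => hall c (List.mem_cons_of_mem _ hc))

/-- helper: `x` occurs only as head, rest is all `y`. -/
lemma dedup_pair_aux {V : Type*} [DecidableEq V] (x y a : V) (t : List V)
    (hall : ∀ c ∈ a :: t, c = x ∨ c = y) (hx : x ∈ a :: t) (hxt : x ∉ t) (hyt : y ∈ t) :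
    (a :: t).getLast? = some y ∧ (a :: t).dedup = [x, y] := by
  have hax : a = x := by
    rcases List.mem_cons.1 hx with h | h
    · exact h.symm
    · exact absurd h hxt
  have hconst : ∀ c ∈ t, c = y := by
    intro c hc
    rcases hall c (List.mem_cons_of_mem _ hc) with h | h
    · exact absurd (h ▸ hc) hxt
    · exact h
  have hne : t ≠ [] := by rintro rfl; simp at hyt
  constructor
  · obtain ⟨b, t', rfl⟩ := List.exists_cons_of_ne_nil hne
    rw [List.getLast?_cons_cons]
    exact getLast?_const y _ (by simp) hconst
  · rw [List.dedup_cons_of_notMem (hax ▸ hxt), dedup_const y t hne hconst, hax]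

lemma dedup_pair {V : Type*} [DecidableEq V] (x y : V) (hxy : x ≠ y) :
    ∀ u : List V, (∀ a ∈ u, a = x ∨ a = y) → x ∈ u → y ∈ u →
      ∃ z b, u.getLast? = some z ∧ z ≠ b ∧ u.dedup = [b, z]
  | [], _, hx, _ => absurd hx (by simp)
  | a :: t, hall, hx, hy => by
    by_cases hbt : x ∈ t ∧ y ∈ t
    · have hat : a ∈ t := by rcases hall a (by simp) with h | h <;> rw [h] <;> [exact hbt.1; exact hbt.2]
      have hne : t ≠ [] := by rintro rfl; exact absurd hbt.1 (by simp)
      obtain ⟨z, b, h1, h2, h3⟩ := dedup_pair x y hxy t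
        (fun c hc => hall c (List.mem_cons_of_mem _ hc)) hbt.1 hbt.2
      refine ⟨z, b, ?_, h2, ?_⟩
      · obtain ⟨c, t', rfl⟩ := List.exists_cons_of_ne_nil hne
        rw [List.getLast?_cons_cons]; exact h1
      · rw [List.dedup_cons_of_mem hat]; exact h3
    · rw [not_and_or] at hbt
      rcases hbt with hxt | hyt
      · have hyt : y ∈ t := by
          rcases List.mem_cons.1 hy with h | h
          · exfalso; rcases List.mem_cons.1 hx with h' | h'
            · exact hxy (h'.trans h.symm)
            · exact hxt h'
          · exact h
        obtain ⟨h1, h2⟩ := dedup_pair_aux x y a t hall hx hxt hyt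
        exact ⟨y, x, h1, Ne.symm hxy, h2⟩
      · have hxt : x ∈ t := by
          rcases List.mem_cons.1 hx with h | h
          · exfalso; rcases List.mem_cons.1 hy with h' | h'
            · exact hxy (h.trans h'.symm)
            · exact hyt h'
          · exact h
        obtain ⟨h1, h2⟩ := dedup_pair_aux y x a t
          (fun c hc => (hall c hc).symm) hy hyt hxt
        exact ⟨x, y, h1, hxy, h2⟩

/-- every `k`-11-representable graph is `(k+1)`-11-representable. -/
theorem k11Representable_succ {V : Type*} [DecidableEq V] [Fintype V] (k : ℕ)
    (G : SimpleGraph V) (h : K11Representable G k) :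
    K11Representable G (k + 1) := by
  obtain ⟨w, hmem, hadj⟩ := h
  refine ⟨w ++ (w.dedup).reverse, fun v => List.mem_append.2 (Or.inl (hmem v)), ?_⟩
  intro x y hxy
  set p : V → Bool := fun a => decide (a = x ∨ a = y) with hp
  set u := w.filter p with hu
  have hfilt : (w ++ (w.dedup).reverse).filter p = u ++ (u.dedup).reverse := by
    rw [List.filter_append, List.filter_reverse, filter_dedup']
  have hxu : x ∈ u := List.mem_filter.2 ⟨hmem x, by simp [hp]⟩
  have hyu : y ∈ u := List.mem_filter.2 ⟨hmem y, by simp [hp]⟩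
  have hall : ∀ a ∈ u, a = x ∨ a = y := fun a ha => by
    have := (List.mem_filter.1 ha).2; simpa [hp] using this
  obtain ⟨z, b, hlast, hzb, hdedup⟩ := dedup_pair x y hxy u hall hxu hyu
  have hcount : pattern11Count ((w ++ (w.dedup).reverse).filter p)
      = pattern11Count u + 1 := by
    rw [hfilt, hdedup]
    have he : u ++ ([b, z] : List V).reverse = (u ++ [z]) ++ [b] := by simp
    rw [he, p11_concat, p11_concat, hlast, List.getLast?_concat]
    simp [hzb, Ne.symm hzb]
  rw [hcount, hadj x y hxy, ← hp, ← hu]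
  omega
end

section
/- For every non-negative integer k, a simple graph G is k-11-representable if and only if every connected component of G is k-11-representable (i.e., if and only if for every vertex v, the induced subgraph of G on the connected component containing v is k-11-representable). -/
namespace P11
variable {V : Type*} [DecidableEq V]

theorem nil : pattern11Count ([] : List V) = 0 := rfl
theorem single (a : V) : pattern11Count [a] = 0 := rfl

theorem cons_cons (a b : V) (l : List V) :
    pattern11Count (a :: b :: l) = (if a = b then 1 else 0) + pattern11Count (b :: l) := by
  simp only [pattern11Count, List.tail_cons, List.zip_cons_cons, List.countP_cons]
  by_cases h : a = b <;> simp [h] <;> omega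

theorem cons_le (a : V) (l : List V) : pattern11Count l ≤ pattern11Count (a :: l) := by
  cases l with
  | nil => simp [nil, single]
  | cons b t => rw [cons_cons]; omega

theorem le_append_right (a b : List V) : pattern11Count b ≤ pattern11Count (a ++ b) := by
  induction a with
  | nil => simp
  | cons x t ih => calc pattern11Count b ≤ pattern11Count (t ++ b) := ih
                    _ ≤ pattern11Count (x :: (t ++ b)) := cons_le _ _
                    _ = pattern11Count ((x :: t) ++ b) := rfl

theorem le_append_left (a b : List V) : pattern11Count a ≤ pattern11Count (a ++ b) := by
  induction a with
  | nil => simp [nil]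
  | cons x t ih =>
    cases t with
    | nil => simp [single]
    | cons y s =>
      have : (x :: y :: s) ++ b = x :: y :: (s ++ b) := rfl
      rw [this, cons_cons, cons_cons]
      have := ih
      have h2 : (y :: s) ++ b = y :: (s ++ b) := rfl
      rw [h2] at this
      omega

theorem replicate (m : ℕ) (x : V) : pattern11Count (List.replicate (m+1) x) = m := by
  induction m with
  | zero => simp [single]
  | succ n ih =>
    rw [List.replicate_succ, List.replicate_succ, cons_cons, ← List.replicate_succ, ih]
    simp [Nat.add_comm]

theorem map_inj {W : Type*} [DecidableEq W] (f : V → W) (hf : Function.Injective f)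
    (l : List V) : pattern11Count (l.map f) = pattern11Count l := by
  induction l with
  | nil => rfl
  | cons a t ih =>
    cases t with
    | nil => rfl
    | cons b s =>
      have : (a :: b :: s).map f = f a :: f b :: (s.map f) := rfl
      rw [this, cons_cons, cons_cons]
      have hmap : (b :: s).map f = f b :: s.map f := rfl
      rw [hmap] at ih
      rw [ih]
      congr 1
      by_cases h : a = b
      · simp [h]
      · simp only [if_neg h, if_neg (fun hc => h (hf hc))]

def fdedup : List V → List V
  | [] => []
  | a :: l => a :: fdedup (l.filter (fun b => decide (¬ b = a)))
  termination_by l => l.length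
  decreasing_by simp; exact (List.length_filter_le _ _).trans (by simp)

theorem mem_fdedup {a : V} : ∀ {l : List V}, a ∈ fdedup l ↔ a ∈ l
  | [] => by simp [fdedup]
  | b :: t => by
    rw [fdedup]
    by_cases h : a = b
    · simp [h]
    · simp only [List.mem_cons, h, false_or]
      rw [mem_fdedup]
      simp [h]
  termination_by l => l.length
  decreasing_by simpa using Nat.lt_succ_of_le (List.length_filter_le _ _)

theorem fdedup_filter (p : V → Bool) : ∀ (l : List V),
    (fdedup l).filter p = fdedup (l.filter p)
  | [] => by simp [fdedup]
  | a :: l => by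
    by_cases h : p a
    · rw [fdedup, List.filter_cons_of_pos h, fdedup_filter p, List.filter_cons_of_pos h]
      conv_rhs => rw [fdedup]
      congr 1
      rw [List.filter_filter, List.filter_filter]
      congr 1
      apply List.filter_congr
      intro x _
      exact Bool.and_comm _ _
    · rw [fdedup, List.filter_cons_of_neg h, fdedup_filter p, List.filter_cons_of_neg h,
        List.filter_filter]
      congr 1
      apply List.filter_congr
      intro x _
      by_cases hxa : x = a
      · subst hxa; simp [h]
      · simp [hxa]
  termination_by l => l.length
  decreasing_by all_goals simpa using Nat.lt_succ_of_le (List.length_filter_le _ _)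

theorem fdedup_const {o : V} {l : List V} (hne : l ≠ []) (hall : ∀ a ∈ l, a = o) :
    fdedup l = [o] := by
  cases l with
  | nil => exact absurd rfl hne
  | cons a t =>
    have ha : a = o := hall a (by simp)
    subst ha
    rw [fdedup]
    have : t.filter (fun b => decide (¬ b = a)) = [] := by
      rw [List.filter_eq_nil_iff]
      intro b hb
      simp [hall b (List.mem_cons_of_mem _ hb)]
    rw [this]
    simp [fdedup]

theorem fdedup_pair {x y h : V} {t : List V} (hxy : x ≠ y)
    (hall : ∀ a ∈ h :: t, a = x ∨ a = y) (hx : x ∈ h :: t) (hy : y ∈ h :: t) :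
    ∃ o, o ≠ h ∧ fdedup (h :: t) = [h, o] := by
  have hh : h = x ∨ h = y := hall h (by simp)
  set o := if h = x then y else x with ho
  have hoh : o ≠ h := by
    rcases hh with h1 | h1 <;> subst h1 <;> simp [ho, hxy, Ne.symm hxy]
  refine ⟨o, hoh, ?_⟩
  rw [fdedup]
  have hot : o ∈ t := by
    have : o ∈ h :: t := by
      rcases hh with h1 | h1 <;> subst h1
      · simpa [ho] using hy
      · simp only [ho, if_neg (Ne.symm hxy)]; exact hx
    rcases List.mem_cons.mp this with h2 | h2
    · exact absurd h2 hoh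
    · exact h2
  have hne : t.filter (fun b => decide (¬ b = h)) ≠ [] := by
    intro hnil
    have := List.filter_eq_nil_iff.mp hnil o hot
    simp [hoh] at this
  have hallo : ∀ a ∈ t.filter (fun b => decide (¬ b = h)), a = o := by
    intro a ha
    have h1 := List.of_mem_filter ha
    have h2 := List.mem_of_mem_filter ha
    have h3 : a = x ∨ a = y := hall a (List.mem_cons_of_mem _ h2)
    simp only [decide_eq_true_eq] at h1
    rcases hh with hh1 | hh1 <;> subst hh1
    · simp only [ho, if_pos rfl]; tauto
    · simp only [ho, if_neg (Ne.symm hxy)]; tauto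
  rw [fdedup_const hne hallo]

theorem blocks (h o : V) (hho : h ≠ o) (t : List V) :
    ∀ m, pattern11Count ((List.replicate m [h,o]).flatten ++ (h :: t)) = pattern11Count (h :: t)
  | 0 => by simp
  | m+1 => by
    obtain ⟨q, hq⟩ : ∃ q, (List.replicate m [h,o]).flatten ++ (h :: t) = h :: q := by
      cases m with
      | zero => exact ⟨t, by simp⟩
      | succ n =>
        exact ⟨o :: ((List.replicate n [h,o]).flatten ++ h :: t), by simp [List.replicate_succ]⟩
    rw [List.replicate_succ, List.flatten_cons]
    have h2 : [h,o] ++ ((List.replicate m [h,o]).flatten ++ h :: t)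
        = h :: o :: ((List.replicate m [h,o]).flatten ++ h :: t) := rfl
    rw [List.append_assoc, h2, hq, cons_cons, cons_cons, if_neg hho, if_neg (Ne.symm hho),
      ← hq, blocks h o hho t m]
    omega

theorem flatten_all_nil {α β : Type*} (g : α → List β) {l : List α}
    (h : ∀ a ∈ l, g a = []) : (l.map g).flatten = [] := by
  rw [List.flatten_eq_nil_iff]
  intro t ht
  obtain ⟨a, ha, rfl⟩ := List.mem_map.mp ht
  exact h a ha

theorem flatten_one {α β : Type*} (g : α → List β) : ∀ {l : List α}, l.Nodup → ∀ {j : α},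
    j ∈ l → (∀ a ∈ l, a ≠ j → g a = []) → (l.map g).flatten = g j := by
  intro l hl
  induction l with
  | nil => intro j hj; simp at hj
  | cons b t ih =>
    intro j hj h0
    rcases List.mem_cons.mp hj with rfl | hjt
    · rw [List.map_cons, List.flatten_cons, flatten_all_nil, List.append_nil]
      intro a ha
      exact h0 a (List.mem_cons_of_mem _ ha) (fun hc => (List.nodup_cons.mp hl).1 (hc ▸ ha))
    · rw [List.map_cons, List.flatten_cons,
        h0 b (by simp) (fun hc => (List.nodup_cons.mp hl).1 (hc ▸ hjt)), List.nil_append]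
      exact ih (List.nodup_cons.mp hl).2 hjt (fun a ha => h0 a (List.mem_cons_of_mem _ ha))

theorem flatten_two {α β : Type*} (g : α → List β) : ∀ {l : List α}, l.Nodup → ∀ {i j : α},
    i ∈ l → j ∈ l → i ≠ j → (∀ a ∈ l, a ≠ i → a ≠ j → g a = []) →
    (l.map g).flatten = g i ++ g j ∨ (l.map g).flatten = g j ++ g i := by
  intro l hl
  induction l with
  | nil => intro i j hi; simp at hi
  | cons b t ih =>
    intro i j hi hj hij h0
    have hnd := List.nodup_cons.mp hl
    rcases List.mem_cons.mp hi with rfl | hit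
    · left
      rw [List.map_cons, List.flatten_cons]
      congr 1
      have hjt : j ∈ t := by
        rcases List.mem_cons.mp hj with rfl | h
        · exact absurd rfl hij
        · exact h
      exact flatten_one g hnd.2 hjt (fun a ha haj =>
        h0 a (List.mem_cons_of_mem _ ha) (fun hc => hnd.1 (hc ▸ ha)) haj)
    · rcases List.mem_cons.mp hj with rfl | hjt
      · right
        rw [List.map_cons, List.flatten_cons]
        congr 1
        exact flatten_one g hnd.2 hit (fun a ha hai =>
          h0 a (List.mem_cons_of_mem _ ha) hai (fun hc => hnd.1 (hc ▸ ha)))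
      · rw [List.map_cons, List.flatten_cons,
          h0 b (by simp) (fun hc => hnd.1 (hc ▸ hit)) (fun hc => hnd.1 (hc ▸ hjt)),
          List.nil_append]
        exact ih hnd.2 hit hjt hij (fun a ha => h0 a (List.mem_cons_of_mem _ ha))

/-- The restriction of a word to a set, pushed into the subtype, then filtered by a pair and
mapped back, equals the original word filtered by the pair (when the pair lies in the set). -/
theorem filterMap_filter_map (S : Set V) [DecidablePred (· ∈ S)] (x y : S) (w : List V) :
    ((w.filterMap (fun a => if h : a ∈ S then some (⟨a, h⟩ : S) else none)).filter
        (fun a => decide (a = x ∨ a = y))).map Subtype.val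
      = w.filter (fun a => decide (a = (x : V) ∨ a = (y : V))) := by
  induction w with
  | nil => rfl
  | cons a t ih =>
    rw [List.filterMap_cons]
    by_cases h : a ∈ S
    · rw [dif_pos h, List.filter_cons, List.filter_cons]
      have hd : (decide ((⟨a, h⟩ : S) = x ∨ (⟨a, h⟩ : S) = y))
          = decide (a = (x : V) ∨ a = (y : V)) := by
        apply decide_eq_decide.mpr
        constructor
        · rintro (rfl | rfl) <;> simp
        · rintro (h1 | h1)
          · left; exact Subtype.ext h1
          · right; exact Subtype.ext h1
      rw [hd]
      by_cases hp : a = (x : V) ∨ a = (y : V)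
      · have hcond : decide (a = (x : V) ∨ a = (y : V)) = true := by simp [hp]
        rw [hcond, if_pos rfl, if_pos rfl, List.map_cons, ih]
      · have hcond : decide (a = (x : V) ∨ a = (y : V)) = false := by simp [hp]
        rw [hcond, if_neg Bool.false_ne_true, if_neg Bool.false_ne_true, ih]
    · rw [dif_neg h, List.filter_cons]
      have hp : decide (a = (x : V) ∨ a = (y : V)) = false := by
        simp only [decide_eq_false_iff_not]
        rintro (rfl | rfl)
        · exact h x.2
        · exact h y.2
      rw [hp]
      simpa using ih

end P11

/-- a graph is `k`-11-representable iff each of its connected components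
(the induced subgraph on the component of each vertex) is `k`-11-representable. -/
theorem k11Representable_iff_components {V : Type*} [DecidableEq V] [Fintype V] (k : ℕ)
    (G : SimpleGraph V) :
    K11Representable G k ↔
      ∀ v : V, K11Representable (G.induce (G.connectedComponentMk v).supp) k := by
  classical
  constructor
  · -- forward: restrict a representant to each component
    rintro ⟨w, hw_cov, hw_adj⟩ v
    set S : Set V := (G.connectedComponentMk v).supp with hS
    refine ⟨w.filterMap (fun a => if h : a ∈ S then some (⟨a, h⟩ : S) else none), ?_, ?_⟩
    · intro z
      apply List.mem_filterMap.mpr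
      exact ⟨z.val, hw_cov z.val, by rw [dif_pos z.2]⟩
    · intro x y hxy
      have hvxy : (x : V) ≠ (y : V) := fun h => hxy (Subtype.ext h)
      have hadj : (G.induce S).Adj x y ↔ G.Adj (x : V) (y : V) := Iff.rfl
      rw [hadj, hw_adj (x : V) (y : V) hvxy]
      have hcount :
          pattern11Count ((w.filterMap
              (fun a => if h : a ∈ S then some (⟨a, h⟩ : S) else none)).filter
                (fun a => decide (a = x ∨ a = y)))
          = pattern11Count (w.filter (fun a => decide (a = (x : V) ∨ a = (y : V)))) := by
        rw [← P11.filterMap_filter_map S x y w, P11.map_inj Subtype.val Subtype.val_injective]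
      rw [hcount]
  · -- backward: assemble representants of the components
    intro hcomp
    choose wfun hwfun using fun v : V => hcomp v
    set c : V → G.ConnectedComponent := fun v => G.connectedComponentMk v with hc
    set u : V → List V := fun v => (wfun v).map Subtype.val with hu
    set P : V → List V := fun v => P11.fdedup (u v) with hP
    set block : V → List V := fun v => (List.replicate (k+2) (P v)).flatten ++ u v with hblock
    set reps : List V := (Finset.univ.filter (fun v : V => (c v).out = v)).toList with hreps
    have hcval : ∀ v : V, c ((c v).out) = c v := fun v => (c v).out_eq
    have hrepmem : ∀ v : V, (c v).out ∈ reps := by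
      intro v
      rw [hreps, Finset.mem_toList, Finset.mem_filter]
      exact ⟨Finset.mem_univ _, congrArg Quot.out (hcval v)⟩
    have hreps_nodup : reps.Nodup := Finset.nodup_toList _
    have hrep_eq : ∀ r ∈ reps, ∀ a : V, c a = c r → (c a).out = r := by
      intro r hr a ha
      rw [hreps, Finset.mem_toList, Finset.mem_filter] at hr
      rw [ha]
      exact hr.2
    have hmem_u : ∀ v a : V, a ∈ u v ↔ c a = c v := by
      intro v a
      constructor
      · intro h
        obtain ⟨b, _, rfl⟩ := List.mem_map.mp h
        exact (SimpleGraph.ConnectedComponent.mem_supp_iff _ _).mp b.2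
      · intro h
        exact List.mem_map.mpr ⟨⟨a, (SimpleGraph.ConnectedComponent.mem_supp_iff _ _).mpr h⟩,
          (hwfun v).1 _, rfl⟩
    have hmem_block : ∀ v a : V, a ∈ block v → c a = c v := by
      intro v a ha
      rw [hblock] at ha
      rcases List.mem_append.mp ha with h | h
      · obtain ⟨t, ht, hat⟩ := List.mem_flatten.mp h
        have := List.eq_of_mem_replicate ht
        subst this
        exact (hmem_u v a).mp (P11.mem_fdedup.mp hat)
      · exact (hmem_u v a).mp h
    have hadj_u : ∀ v x y : V, x ≠ y → c x = c v → c y = c v →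
        (G.Adj x y ↔
          pattern11Count ((u v).filter (fun a => decide (a = x ∨ a = y))) ≤ k) := by
      intro v x y hxy hcx hcy
      have hxS : x ∈ (c v).supp := (SimpleGraph.ConnectedComponent.mem_supp_iff _ _).mpr hcx
      have hyS : y ∈ (c v).supp := (SimpleGraph.ConnectedComponent.mem_supp_iff _ _).mpr hcy
      have hne : (⟨x, hxS⟩ : (c v).supp) ≠ ⟨y, hyS⟩ := fun h => hxy (congrArg Subtype.val h)
      have := (hwfun v).2 ⟨x, hxS⟩ ⟨y, hyS⟩ hne
      have hadj : (G.induce (c v).supp).Adj ⟨x, hxS⟩ ⟨y, hyS⟩ ↔ G.Adj x y := Iff.rfl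
      rw [hadj] at this
      rw [this]
      have hfil : (u v).filter (fun a => decide (a = x ∨ a = y))
          = ((wfun v).filter
              (fun a => decide (a = (⟨x, hxS⟩ : (c v).supp) ∨ a = ⟨y, hyS⟩))).map
                Subtype.val := by
        rw [hu]
        simp only
        rw [List.filter_map]
        congr 1
        apply List.filter_congr
        intro b _
        apply decide_eq_decide.mpr
        constructor
        · rintro (h1 | h1)
          · left; exact Subtype.ext h1
          · right; exact Subtype.ext h1
        · rintro (rfl | rfl) <;> simp
      rw [hfil, P11.map_inj Subtype.val Subtype.val_injective]
    refine ⟨(reps.map block).flatten, ?_, ?_⟩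
    · -- coverage
      intro v
      refine List.mem_flatten.mpr ⟨block ((c v).out), List.mem_map_of_mem (hrepmem v), ?_⟩
      rw [hblock]
      refine List.mem_append.mpr (Or.inr ?_)
      exact (hmem_u _ v).mpr (hcval v).symm
    · -- adjacency
      intro x y hxy
      set p : V → Bool := fun a => decide (a = x ∨ a = y) with hp
      have hWfilter : ((reps.map block).flatten).filter p
          = (reps.map (fun r => (block r).filter p)).flatten := by
        rw [List.filter_flatten, List.map_map]
        rfl
      have hsupp : ∀ r ∈ reps, r ≠ (c x).out → r ≠ (c y).out → (block r).filter p = [] := by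
        intro r hr hrx hry
        rw [List.filter_eq_nil_iff]
        intro a ha hpa
        rw [hp] at hpa
        simp only [decide_eq_true_eq] at hpa
        rcases hpa with rfl | rfl
        · exact hrx (hrep_eq r hr a (hmem_block r a ha)).symm
        · exact hry (hrep_eq r hr a (hmem_block r a ha)).symm
      by_cases hcc : c x = c y
      · -- same component
        set r : V := (c x).out with hr
        have hcx : c x = c r := (hcval x).symm
        have hcy : c y = c r := hcc ▸ hcx
        have hone : ((reps.map block).flatten).filter p = (block r).filter p := by
          rw [hWfilter]
          exact P11.flatten_one _ hreps_nodup (hrepmem x)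
            (fun a ha har => hsupp a ha har (by rwa [← hcc]))
        have hblockfil : (block r).filter p
            = (List.replicate (k+2) ((P r).filter p)).flatten ++ (u r).filter p := by
          rw [hblock]
          simp only
          rw [List.filter_append, List.filter_flatten, List.map_replicate]
        have hPfil : (P r).filter p = P11.fdedup ((u r).filter p) := by
          rw [hP]
          simp only
          exact P11.fdedup_filter p (u r)
        set s : List V := (u r).filter p with hs
        have hxs : x ∈ s := by
          rw [hs]
          exact List.mem_filter.mpr ⟨(hmem_u r x).mpr hcx, by simp [hp]⟩
        have hys : y ∈ s := by
          rw [hs]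
          exact List.mem_filter.mpr ⟨(hmem_u r y).mpr hcy, by simp [hp]⟩
        have hall : ∀ a ∈ s, a = x ∨ a = y := by
          intro a ha
          have := List.of_mem_filter ha
          rw [hp] at this
          simpa using this
        obtain ⟨h0, t0, hst⟩ : ∃ h0 t0, s = h0 :: t0 := by
          cases hsc : s with
          | nil => rw [hsc] at hxs; simp at hxs
          | cons a b => exact ⟨a, b, rfl⟩
        obtain ⟨o, hoh, hfd⟩ := P11.fdedup_pair hxy (hst ▸ hall) (hst ▸ hxs) (hst ▸ hys)
        have hcount : pattern11Count (((reps.map block).flatten).filter p)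
            = pattern11Count s := by
          rw [hone, hblockfil, hPfil, hst, hfd]
          exact P11.blocks h0 o (Ne.symm hoh) t0 (k+2)
        rw [hcount, hs]
        exact hadj_u r x y hxy hcx hcy
      · -- different components
        have hrne : (c x).out ≠ (c y).out := by
          intro h
          exact hcc (by rw [← hcval x, h, hcval y])
        -- the filtered block of x's component is a long constant block of x's (similarly y)
        have hblockrep : ∀ z : V, (z = x ∨ z = y) →
            ∃ m : ℕ, k + 1 ≤ m ∧ (block ((c z).out)).filter p = List.replicate (m+1) z := by
          intro z hz
          set rz : V := (c z).out with hrz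
          have hcz : c z = c rz := (hcval z).symm
          have hallz : ∀ a ∈ (block rz).filter p, a = z := by
            intro a ha
            have ham := hmem_block rz a (List.mem_of_mem_filter ha)
            have hpa := List.of_mem_filter ha
            rw [hp] at hpa
            simp only [decide_eq_true_eq] at hpa
            rcases hz with rfl | rfl
            · rcases hpa with rfl | rfl
              · rfl
              · exact absurd (ham.trans hcz.symm) (Ne.symm hcc)
            · rcases hpa with rfl | rfl
              · exact absurd (ham.trans hcz.symm) hcc
              · rfl
          have hzmem : z ∈ (block rz).filter p := by
            refine List.mem_filter.mpr ⟨?_, ?_⟩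
            · rw [hblock]
              simp only
              exact List.mem_append.mpr (Or.inr ((hmem_u rz z).mpr hcz))
            · rcases hz with rfl | rfl <;> simp [hp]
          have hlen : k + 2 ≤ ((block rz).filter p).length := by
            have hPz : z ∈ (P rz).filter p := by
              refine List.mem_filter.mpr ⟨?_, ?_⟩
              · rw [hP]
                exact P11.mem_fdedup.mpr ((hmem_u rz z).mpr hcz)
              · rcases hz with rfl | rfl <;> simp [hp]
            have hPlen : 1 ≤ ((P rz).filter p).length := List.length_pos_iff.mpr
              (List.ne_nil_of_mem hPz)
            have hble : (block rz).filter p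
                = (List.replicate (k+2) ((P rz).filter p)).flatten ++ (u rz).filter p := by
              rw [hblock]
              simp only
              rw [List.filter_append, List.filter_flatten, List.map_replicate]
            rw [hble, List.length_append, List.length_flatten]
            simp only [List.map_replicate, List.sum_replicate, smul_eq_mul]
            nlinarith
          refine ⟨((block rz).filter p).length - 1, by omega, ?_⟩
          have hA := List.eq_replicate_length.mpr hallz
          rw [hA, List.length_replicate]
          congr 1
          omega
        obtain ⟨mx, hmx, hbx⟩ := hblockrep x (Or.inl rfl)
        obtain ⟨my, hmy, hby⟩ := hblockrep y (Or.inr rfl)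
        have htwo := P11.flatten_two (fun r => (block r).filter p) hreps_nodup
          (hrepmem x) (hrepmem y) hrne
          (fun a ha hax hay => hsupp a ha hax hay)
        have hbig : k + 1 ≤ pattern11Count (((reps.map block).flatten).filter p) := by
          rw [hWfilter]
          rcases htwo with h | h
          · rw [h]
            calc k + 1 ≤ mx := hmx
              _ = pattern11Count (List.replicate (mx+1) x) := (P11.replicate mx x).symm
              _ = pattern11Count ((block ((c x).out)).filter p) := by rw [hbx]
              _ ≤ _ := P11.le_append_left _ _
          · rw [h]
            calc k + 1 ≤ mx := hmx
              _ = pattern11Count (List.replicate (mx+1) x) := (P11.replicate mx x).symm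
              _ = pattern11Count ((block ((c x).out)).filter p) := by rw [hbx]
              _ ≤ _ := P11.le_append_right _ _
        have hnadj : ¬ G.Adj x y := fun h =>
          hcc (SimpleGraph.ConnectedComponent.sound h.reachable)
        exact iff_of_false hnadj (by omega)
end

section
/- Let k ≥ 0, let G be a simple graph with a vertex x, and let G_{xy} be the graph obtained from G by adding a new vertex y adjacent only to x. Then G is k-11-representable if and only if G_{xy} is k-11-representable. Equivalently: if H is a simple graph with a vertex y of degree 1 whose unique neighbour is x, then H is k-11-representable if and only if the induced subgraph H \ y is k-11-representable. -/
set_option linter.unusedSectionVars false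
set_option linter.unreachableTactic false
set_option linter.unusedTactic false
set_option linter.unnecessarySimpa false
set_option maxHeartbeats 1000000

namespace K11
variable {V : Type*} [DecidableEq V]

/-- recursive version of `pattern11Count` -/
def cnt : List V → ℕ
  | [] => 0
  | [_] => 0
  | a :: b :: l => (if a = b then 1 else 0) + cnt (b :: l)

lemma cnt_cons_cons (a b : V) (l : List V) :
    cnt (a :: b :: l) = (if a = b then 1 else 0) + cnt (b :: l) := rfl

lemma pattern11Count_eq_cnt : ∀ l : List V, pattern11Count l = cnt l
  | [] => rfl
  | [_] => rfl
  | a :: b :: l => by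
    have ih := pattern11Count_eq_cnt (b :: l)
    unfold pattern11Count at ih ⊢
    rw [List.tail_cons, List.zip_cons_cons, List.countP_cons]
    rw [List.tail_cons] at ih
    rw [ih, cnt_cons_cons]
    by_cases h : a = b <;> simp [h, Nat.add_comm]

lemma cnt_le_cons (a : V) (l : List V) : cnt l ≤ cnt (a :: l) := by
  cases l with
  | nil => simp [cnt]
  | cons b t => rw [cnt_cons_cons]; omega

lemma cnt_le_append (s t : List V) : cnt t ≤ cnt (s ++ t) := by
  induction s with
  | nil => simp
  | cons a s ih => exact le_trans ih (by simpa using cnt_le_cons a (s ++ t))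

lemma getLast?_cons_of_ne_nil (a : V) {l : List V} (h : l ≠ []) :
    (a :: l).getLast? = l.getLast? := by
  cases l with
  | nil => exact absurd rfl h
  | cons b t => exact List.getLast?_cons_cons

lemma cnt_append_of_ne (s t : List V)
    (h : ∀ e, s.getLast? = some e → t.head? ≠ some e) :
    cnt (s ++ t) = cnt s + cnt t := by
  induction s with
  | nil => simp [cnt]
  | cons a s ih =>
    cases s with
    | nil =>
      cases t with
      | nil => simp [cnt]
      | cons c t' =>
        have hac : a ≠ c := by
          intro hac; exact h a (by simp) (by simp [hac])
        simp [cnt_cons_cons, cnt, hac]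
    | cons b s' =>
      have h' : ∀ e, (b :: s').getLast? = some e → t.head? ≠ some e := by
        intro e he; exact h e (by rw [List.getLast?_cons_cons]; exact he)
      have := ih h'
      simp only [List.cons_append, cnt_cons_cons] at *
      omega

lemma cnt_eq_zero_of_chain' : ∀ {l : List V}, List.Chain' (· ≠ ·) l → cnt l = 0
  | [], _ => rfl
  | [_], _ => rfl
  | a :: b :: l, h => by
    unfold List.Chain' at h
    rw [List.isChain_cons_cons] at h
    rw [cnt_cons_cons, if_neg h.1, cnt_eq_zero_of_chain' h.2]

/-- `pw l n = l ++ l ++ ⋯ ++ l`, `n` copies -/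
def pw (l : List V) : ℕ → List V
  | 0 => []
  | n + 1 => l ++ pw l n

lemma pw_succ (l : List V) (n : ℕ) : pw l (n + 1) = l ++ pw l n := rfl

lemma pw_add (l : List V) (m n : ℕ) : pw l (m + n) = pw l m ++ pw l n := by
  induction m with
  | zero => simp [pw]
  | succ m ih => rw [Nat.succ_add, pw_succ, pw_succ, ih, List.append_assoc]

lemma filter_pw (p : V → Bool) (l : List V) (n : ℕ) :
    (pw l n).filter p = pw (l.filter p) n := by
  induction n with
  | zero => rfl
  | succ n ih => rw [pw_succ, pw_succ, List.filter_append, ih]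

lemma mem_pw {c : V} {l : List V} (hc : c ∈ l) (n : ℕ) : c ∈ pw l (n + 1) := by
  rw [pw_succ]; exact List.mem_append_left _ hc

lemma head?_pw_pair (e₁ e₂ : V) (n : ℕ) (r : List V) :
    (pw [e₁, e₂] (n + 1) ++ r).head? = some e₁ := rfl

lemma prefix_pair {r : List V} {e₁ e₂ : V} (h : r <+: [e₁, e₂]) :
    r = [] ∨ r = [e₁] ∨ r = [e₁, e₂] := by
  obtain ⟨t, ht⟩ := h
  match r, t, ht with
  | [], _, _ => exact Or.inl rfl
  | [c], [d], ht => simp at ht; exact Or.inr (Or.inl (by rw [ht.1])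
  )
  | [c, d], [], ht => simp at ht; exact Or.inr (Or.inr (by rw [ht.1, ht.2]))

lemma chain'_pw_pair {e₁ e₂ : V} (h : e₁ ≠ e₂) {r : List V}
    (hr : r = [] ∨ r = [e₁] ∨ r = [e₁, e₂]) :
    ∀ n, List.Chain' (· ≠ ·) (pw [e₁, e₂] n ++ r)
  | 0 => by
    rcases hr with h1 | h1 | h1 <;> subst h1 <;> simp [pw, List.Chain', List.isChain_cons, h]
  | n + 1 => by
    have ih := chain'_pw_pair h hr n
    rw [pw_succ]
    have : ([e₁, e₂] ++ (pw [e₁, e₂] n ++ r)) = e₁ :: e₂ :: (pw [e₁, e₂] n ++ r) := by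
      simp
    rw [List.append_assoc, this]
    unfold List.Chain'
    rw [List.isChain_cons_cons]
    refine ⟨h, ?_⟩
    rw [List.isChain_cons]
    refine ⟨?_, ih⟩
    intro z hz
    cases n with
    | zero =>
      rcases hr with h1 | h1 | h1 <;> subst h1 <;> simp [pw] at hz <;> (subst hz; exact h.symm)
    | succ m =>
      rw [head?_pw_pair] at hz
      simp at hz; subst hz; exact h.symm



/-- the key list identity:
`A ++ C ++ (B A C B A C)^n = (A C B)^(n+n) ++ A ++ C`. -/
lemma acb (A B C : List V) :
    ∀ n, A ++ C ++ pw (B ++ A ++ C ++ B ++ A ++ C) n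
      = pw (A ++ C ++ B) (n + n) ++ (A ++ C)
  | 0 => by simp [pw]
  | n + 1 => by
    have ih := acb A B C n
    have h2 : n + 1 + (n + 1) = (n + n) + 1 + 1 := by omega
    rw [h2, pw_succ, pw_succ, pw_succ]
    rw [show (B ++ A ++ C ++ B ++ A ++ C) ++ pw (B ++ A ++ C ++ B ++ A ++ C) n
      = B ++ A ++ C ++ B ++ (A ++ C ++ pw (B ++ A ++ C ++ B ++ A ++ C) n) by
        simp [List.append_assoc]]
    rw [ih]
    simp [List.append_assoc]

/-- `[x] ++ (y x y x)^n = (x y)^(n+n) ++ [x]` -/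
lemma shift_xy (x y : V) : ∀ n, [x] ++ pw [y, x, y, x] n = pw [x, y] (n + n) ++ [x]
  | 0 => by simp [pw]
  | n + 1 => by
    have ih := shift_xy x y n
    have h2 : n + 1 + (n + 1) = (n + n) + 1 + 1 := by omega
    rw [h2, pw_succ, pw_succ, pw_succ]
    rw [show ([y, x, y, x] : List V) ++ pw [y, x, y, x] n
        = [y, x, y] ++ ([x] ++ pw [y, x, y, x] n) by simp]
    rw [ih]; simp

def gx (x y : V) (m : List V) : List V := m.flatMap fun c => if c = x then [x, y] else [c]

lemma mem_gx {c : V} (x y : V) {m : List V} (hc : c ∈ m) : c ∈ gx x y m := by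
  unfold gx
  rw [List.mem_flatMap]
  refine ⟨c, hc, ?_⟩
  by_cases h : c = x <;> simp [h]

lemma filter_gx (x y : V) (p : V → Bool) (hpy : p y = false) (m : List V) :
    (gx x y m).filter p = m.filter p := by
  induction m with
  | nil => rfl
  | cons c m ih =>
    unfold gx at *
    rw [List.flatMap_cons, List.filter_append, ih, List.filter_cons]
    by_cases h : c = x
    · subst h
      by_cases h2 : p c <;> simp [h2, hpy, List.filter_cons]
    · by_cases h2 : p c <;> simp [List.filter_singleton, h, h2]

lemma filter_gx_xy (x y : V) (hxy : x ≠ y) {m : List V} (hym : y ∉ m) :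
    (gx x y m).filter (fun c => decide (c = x ∨ c = y)) = pw [x, y] (m.count x) := by
  induction m with
  | nil => rfl
  | cons c m ih =>
    have hym' : y ∉ m := fun h => hym (List.mem_cons_of_mem _ h)
    have ih' := ih hym'
    unfold gx at *
    rw [List.flatMap_cons, List.filter_append, ih', List.count_cons]
    by_cases h : c = x
    · subst h
      have hcnt : List.count c m + (if (c == c) = true then 1 else 0)
          = List.count c m + 1 := by simp
      rw [hcnt, pw_succ]
      simp [List.filter_cons, hxy]
    · have hcy : c ≠ y := fun h2 => hym (by simp [h2])
      simp [h, List.filter_cons, hcy, Ne.symm hcy]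

lemma getLast?_filter_dedup (p : V → Bool) : ∀ l : List V,
    (l.filter p).getLast? = (l.dedup.filter p).getLast? := by
  intro l
  induction l with
  | nil => rfl
  | cons a t ih =>
    by_cases ha : a ∈ t
    · rw [List.dedup_cons_of_mem ha, List.filter_cons]
      by_cases hp : p a
      · simp only [hp, if_pos]
        have hne : t.filter p ≠ [] := by
          intro h
          rw [List.filter_eq_nil_iff] at h
          exact h a ha hp
        cases hfp : t.filter p with
        | nil => exact absurd hfp hne
        | cons c r =>
          rw [List.getLast?_cons_cons, ← hfp, ih]
      · rw [if_neg hp]; exact ih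
    · rw [List.dedup_cons_of_notMem ha, List.filter_cons, List.filter_cons]
      by_cases hp : p a
      · simp only [hp, if_pos]
        have hiff : t.filter p = [] ↔ t.dedup.filter p = [] := by
          rw [List.filter_eq_nil_iff, List.filter_eq_nil_iff]
          constructor
          · intro h c hc; exact h c (List.mem_dedup.mp hc)
          · intro h c hc; exact h c (List.mem_dedup.mpr hc)
        cases hfp : t.filter p with
        | nil =>
          rw [hiff.mp hfp]
        | cons c r =>
          cases hfd : t.dedup.filter p with
          | nil => exact absurd (hiff.mpr hfd) (by rw [hfp]; simp)
          | cons d r' =>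
            rw [List.getLast?_cons_cons, List.getLast?_cons_cons, ← hfp, ← hfd, ih]
      · rw [if_neg hp, if_neg hp]; exact ih

lemma list_eq_pair {l : List V} {a b : V} (hn : l.Nodup) (ha : a ∈ l) (hb : b ∈ l)
    (hab : a ≠ b) (hall : ∀ c ∈ l, c = a ∨ c = b) :
    l = [a, b] ∨ l = [b, a] := by
  match l, hn, ha, hb, hall with
  | [c], _, ha, hb, _ =>
    simp at ha hb; exact absurd (ha.trans hb.symm) hab
  | [c, d], hn, ha, hb, hall =>
    have hc := hall c (by simp)
    have hd := hall d (by simp)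
    have hcd : c ≠ d := by simp at hn; exact hn
    rcases hc with hc | hc <;> rcases hd with hd | hd <;> subst hc <;> subst hd
    · exact absurd rfl hcd
    · exact Or.inl rfl
    · exact Or.inr rfl
    · exact absurd rfl hcd
  | c :: d :: e :: r, hn, ha, hb, hall =>
    exfalso
    have hc := hall c (by simp)
    have hd := hall d (by simp)
    have he := hall e (by simp)
    simp only [List.nodup_cons, List.mem_cons] at hn
    rcases hc with hc | hc <;> rcases hd with hd | hd <;> rcases he with he | he <;>
      subst hc <;> subst hd <;> try subst he
    all_goals first
      | exact hn.1 (Or.inl rfl)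
      | exact hn.2.1 (Or.inl rfl)
      | exact hn.1 (Or.inr (Or.inl rfl))
      | exact hn.1 (Or.inr (Or.inl he.symm))
      | exact hn.2.1 (Or.inl he.symm)

lemma filter_nodup_single {l : List V} {v : V} (hn : l.Nodup) (hv : v ∈ l)
    (p : V → Bool) (hp : ∀ c ∈ l, (p c = true ↔ c = v)) :
    l.filter p = [v] := by
  induction l with
  | nil => simp at hv
  | cons c l ih =>
    simp only [List.nodup_cons] at hn
    rw [List.filter_cons]
    by_cases hc : c = v
    · subst hc
      simp only [if_pos ((hp c (by simp)).mpr rfl)]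
      have : l.filter p = [] := by
        rw [List.filter_eq_nil_iff]
        intro a hal hpa
        have := (hp a (by simp [hal])).mp hpa
        subst this; exact hn.1 hal
      rw [this]
    · have hvl : v ∈ l := by
        rcases List.mem_cons.mp hv with h | h
        · exact absurd h.symm hc
        · exact h
      have hpc : p c = false := by
        rw [Bool.eq_false_iff]; intro h; exact hc ((hp c (by simp)).mp h)
      rw [if_neg (by simp [hpc])]
      exact ih hn.2 hvl (fun a hal => hp a (by simp [hal]))


lemma cnt_map_inj {W : Type*} [DecidableEq W] {f : V → W} (hf : Function.Injective f) :
    ∀ l : List V, cnt (l.map f) = cnt l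
  | [] => rfl
  | [_] => rfl
  | a :: b :: l => by
    have ih := cnt_map_inj hf (b :: l)
    simp only [List.map_cons] at *
    show (if f a = f b then 1 else 0) + cnt (f b :: List.map f l) = _
    rw [ih]
    congr 1
    by_cases h : a = b
    · simp [h]
    · rw [if_neg h, if_neg (fun hc => h (hf hc))]

lemma cnt_pw_block {v y : V} (hvy : v ≠ y) : ∀ n, n ≤ cnt (pw [v, y, y, v] n)
  | 0 => Nat.zero_le _
  | n + 1 => by
    have ih := cnt_pw_block hvy n
    rw [pw_succ]
    show n + 1 ≤ cnt (v :: y :: y :: v :: pw [v, y, y, v] n)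
    have h1 : cnt (v :: y :: y :: v :: pw [v, y, y, v] n)
        = (if v = y then 1 else 0) + ((if y = y then 1 else 0)
          + ((if y = v then 1 else 0) + cnt (v :: pw [v, y, y, v] n))) := rfl
    rw [h1, if_neg hvy, if_pos rfl, if_neg (Ne.symm hvy)]
    have h2 : cnt (pw [v, y, y, v] n) ≤ cnt (v :: pw [v, y, y, v] n) := by
      cases hq : pw [v, y, y, v] n with
      | nil => simp [cnt]
      | cons c r => show _ ≤ (if v = c then 1 else 0) + _; omega
    omega


section Construction
variable {x y a b v : V} {m Pl Ql : List V} {k : ℕ}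

/-- The big word representing `H`:
`g(m ++ P) ++ [x] ++ (τ ++ [y,x,y] ++ τ ++ [x])^(k+1)` where `τ = Q ++ P`,
`m.dedup = P ++ x :: Q`, and `g` inserts `y` after every occurrence of `x`. -/
def bigWord (x y : V) (m Pl Ql : List V) (k : ℕ) : List V :=
  gx x y (m ++ Pl) ++ [x] ++
    pw ((Ql ++ Pl) ++ ([y, x, y] ++ ((Ql ++ Pl) ++ [x]))) (k + 1)

lemma filter_bigWord (p : V → Bool) (hpy : p y = false) :
    (bigWord x y m Pl Ql k).filter p
      = (m.filter p) ++ (Pl.filter p ++ ([x].filter p ++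
          pw (Ql.filter p ++ (Pl.filter p ++ ([x].filter p ++
            (Ql.filter p ++ (Pl.filter p ++ [x].filter p))))) (k + 1))) := by
  unfold bigWord
  rw [List.filter_append, List.filter_append, filter_gx x y p hpy,
    List.filter_append, filter_pw]
  have hyxy : ([y, x, y] : List V).filter p = [x].filter p := by
    simp [List.filter_cons, List.filter_nil, hpy]
  simp only [List.filter_append, hyxy, List.append_assoc]

lemma cnt_bigWord_pair (p : V → Bool)
    (hσ : m.dedup = Pl ++ x :: Ql) (hpy : p y = false)
    (ha : a ∈ m) (hb : b ∈ m) (hab : a ≠ b)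
    (hpmem : ∀ c, p c = true ↔ (c = a ∨ c = b)) :
    cnt ((bigWord x y m Pl Ql k).filter p) = cnt (m.filter p) := by
  have hmain := filter_bigWord (x := x) (y := y) (m := m) (Pl := Pl) (Ql := Ql)
    (k := k) p hpy
  set A := Pl.filter p with hA
  set B := Ql.filter p with hB
  set C := [x].filter p with hC
  -- rewrite the tail using the `acb` identity
  have hacb := acb A B C (k + 1)
  have htail : A ++ (C ++ pw (B ++ (A ++ (C ++ (B ++ (A ++ C))))) (k + 1))
      = pw (A ++ C ++ B) (k + 1 + (k + 1)) ++ (A ++ C) := by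
    rw [← hacb]; simp [List.append_assoc]
  rw [hmain, htail]
  -- identify the filtered dedup
  have hfcons : ∀ (c : V) (t : List V), (c :: t).filter p = [c].filter p ++ t.filter p := by
    intro c t; by_cases h : p c <;> simp [List.filter_cons, h]
  have hσf : (m.dedup).filter p = A ++ C ++ B := by
    rw [hσ, List.filter_append, hfcons x Ql, hA, hB, hC, List.append_assoc]
  have hnd : ((m.dedup).filter p).Nodup := List.Nodup.filter p (List.nodup_dedup m)
  have hamem : a ∈ (m.dedup).filter p :=
    List.mem_filter.mpr ⟨List.mem_dedup.mpr ha, (hpmem a).mpr (Or.inl rfl)⟩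
  have hbmem : b ∈ (m.dedup).filter p :=
    List.mem_filter.mpr ⟨List.mem_dedup.mpr hb, (hpmem b).mpr (Or.inr rfl)⟩
  have hall : ∀ c ∈ (m.dedup).filter p, c = a ∨ c = b := by
    intro c hc
    exact (hpmem c).mp (List.of_mem_filter hc)
  have hpair := list_eq_pair hnd hamem hbmem hab hall
  -- extract e₁ e₂
  obtain ⟨e₁, e₂, he, hee⟩ : ∃ e₁ e₂, (m.dedup).filter p = [e₁, e₂] ∧ e₁ ≠ e₂ := by
    rcases hpair with h | h
    · exact ⟨a, b, h, hab⟩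
    · exact ⟨b, a, h, hab.symm⟩
  -- the prefix
  have hpref : (A ++ C) <+: [e₁, e₂] := by
    rw [← he, hσf]
    have : (Pl ++ [x]).filter p <+: (m.dedup).filter p := by
      refine List.IsPrefix.filter p ⟨Ql, ?_⟩
      rw [hσ]; simp
    rw [hσf] at this
    have hAC : (Pl ++ [x]).filter p = A ++ C := by
      rw [List.filter_append]
    rwa [hAC] at this
  have hprefcases := prefix_pair hpref
  have hACB : A ++ C ++ B = [e₁, e₂] := by rw [← hσf, he]
  rw [hACB]
  -- last of filtered m
  have hlast : (m.filter p).getLast? = some e₂ := by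
    rw [getLast?_filter_dedup p m, he]
    rfl
  -- count of tail is zero
  have hchain := chain'_pw_pair hee hprefcases (k + 1 + (k + 1))
  have htail0 : cnt (pw [e₁, e₂] (k + 1 + (k + 1)) ++ (A ++ C)) = 0 :=
    cnt_eq_zero_of_chain' hchain
  have hhead : (pw [e₁, e₂] (k + 1 + (k + 1)) ++ (A ++ C)).head? = some e₁ := by
    have hsucc : k + 1 + (k + 1) = (k + 1 + k) + 1 := by omega
    rw [hsucc]
    exact head?_pw_pair e₁ e₂ (k + 1 + k) (A ++ C)
  have hne : ∀ e, (m.filter p).getLast? = some e →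
      (pw [e₁, e₂] (k + 1 + (k + 1)) ++ (A ++ C)).head? ≠ some e := by
    intro e hle hcon
    rw [hlast] at hle
    injection hle with hle
    subst hle
    rw [hhead] at hcon
    injection hcon with hcon
    exact hee hcon
  rw [cnt_append_of_ne _ _ hne, htail0]
  omega

lemma nodup_parts (hσ : m.dedup = Pl ++ x :: Ql) :
    x ∉ Pl ∧ x ∉ Ql ∧ (Ql ++ Pl).Nodup := by
  have h := List.nodup_dedup m
  rw [hσ] at h
  have h1 : Pl.Nodup := (List.nodup_append'.mp h).1
  have h2 : (x :: Ql).Nodup := (List.nodup_append'.mp h).2.1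
  have hd : List.Disjoint Pl (x :: Ql) := (List.nodup_append'.mp h).2.2
  have hxq : x ∉ Ql := (List.nodup_cons.mp h2).1
  have hq : Ql.Nodup := (List.nodup_cons.mp h2).2
  have hxp : x ∉ Pl := fun hx => hd hx (by simp)
  refine ⟨hxp, hxq, List.nodup_append'.mpr ⟨hq, h1, ?_⟩⟩
  intro c hcq hcp
  exact hd hcp (by simp [hcq])

lemma mem_tau_of_mem (hσ : m.dedup = Pl ++ x :: Ql) (hv : v ∈ m) (hvx : v ≠ x) :
    v ∈ Ql ++ Pl := by
  have : v ∈ m.dedup := List.mem_dedup.mpr hv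
  rw [hσ] at this
  rcases List.mem_append.mp this with h | h
  · exact List.mem_append.mpr (Or.inr h)
  · rcases List.mem_cons.mp h with h | h
    · exact absurd h hvx
    · exact List.mem_append.mpr (Or.inl h)

lemma not_mem_tau_y (hσ : m.dedup = Pl ++ x :: Ql) (hym : y ∉ m) : y ∉ Ql ++ Pl := by
  intro hy
  apply hym
  apply List.mem_dedup.mp
  rw [hσ]
  rcases List.mem_append.mp hy with h | h
  · exact List.mem_append.mpr (Or.inr (by simp [h]))
  · exact List.mem_append.mpr (Or.inl h)

lemma filter_bigWord_raw (p : V → Bool) :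
    (bigWord x y m Pl Ql k).filter p
      = (gx x y (m ++ Pl)).filter p ++ ([x].filter p ++
          pw (Ql.filter p ++ (Pl.filter p ++ ([y, x, y].filter p ++
            (Ql.filter p ++ (Pl.filter p ++ [x].filter p))))) (k + 1)) := by
  unfold bigWord
  simp only [List.filter_append, filter_pw, List.append_assoc]

lemma cnt_bigWord_xy (hxy : x ≠ y)
    (hσ : m.dedup = Pl ++ x :: Ql) (hym : y ∉ m) :
    cnt ((bigWord x y m Pl Ql k).filter (fun c => decide (c = x ∨ c = y))) = 0 := by
  set p := (fun c => decide (c = x ∨ c = y)) with hp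
  obtain ⟨hxp, hxq, hnd⟩ := nodup_parts hσ
  have hyt : y ∉ Ql ++ Pl := not_mem_tau_y hσ hym
  have hypl : y ∉ Pl := fun h => hyt (List.mem_append.mpr (Or.inr h))
  have hymPl : y ∉ m ++ Pl := by
    intro h; rcases List.mem_append.mp h with h | h
    · exact hym h
    · exact hypl h
  have hfq : Ql.filter p = [] := by
    rw [List.filter_eq_nil_iff]
    intro c hc hpc
    rw [hp] at hpc
    simp only [decide_eq_true_eq] at hpc
    rcases hpc with h | h
    · exact hxq (h ▸ hc)
    · exact hyt (List.mem_append.mpr (Or.inl (h ▸ hc)))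
  have hfpl : Pl.filter p = [] := by
    rw [List.filter_eq_nil_iff]
    intro c hc hpc
    rw [hp] at hpc
    simp only [decide_eq_true_eq] at hpc
    rcases hpc with h | h
    · exact hxp (h ▸ hc)
    · exact hypl (h ▸ hc)
  have hfx : ([x] : List V).filter p = [x] := by
    simp [hp, List.filter_cons]
  have hfyxy : ([y, x, y] : List V).filter p = [y, x, y] := by
    simp [hp, List.filter_cons]
  rw [filter_bigWord_raw, filter_gx_xy x y hxy hymPl, hfq, hfpl, hfx, hfyxy]
  simp only [List.nil_append, List.append_nil]
  have hshift : ([x] : List V) ++ pw ([y, x, y] ++ [x]) (k + 1)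
      = pw [x, y] (k + 1 + (k + 1)) ++ [x] := by
    have h4 : ([y, x, y] ++ [x] : List V) = [y, x, y, x] := by simp
    rw [h4, shift_xy x y (k + 1)]
  rw [hshift, ← List.append_assoc, ← pw_add]
  apply cnt_eq_zero_of_chain'
  exact chain'_pw_pair hxy (Or.inr (Or.inl rfl)) _

lemma cnt_bigWord_yv (p : V → Bool)
    (hσ : m.dedup = Pl ++ x :: Ql) (hym : y ∉ m)
    (hv : v ∈ m) (hvx : v ≠ x) (hvy : v ≠ y) (hyx : y ≠ x)
    (hpmem : ∀ c, p c = true ↔ (c = y ∨ c = v)) :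
    k + 1 ≤ cnt ((bigWord x y m Pl Ql k).filter p) := by
  obtain ⟨hxp, hxq, hnd⟩ := nodup_parts hσ
  have hyt : y ∉ Ql ++ Pl := not_mem_tau_y hσ hym
  have hvt : v ∈ Ql ++ Pl := mem_tau_of_mem hσ hv hvx
  have htau : (Ql ++ Pl).filter p = [v] := by
    apply filter_nodup_single hnd hvt
    intro c hc
    rw [hpmem c]
    constructor
    · intro h
      rcases h with h | h
      · subst h; exact absurd hc hyt
      · exact h
    · intro h; exact Or.inr h
  have hpx : p x = false := by
    rw [Bool.eq_false_iff]
    intro h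
    rcases (hpmem x).mp h with h | h
    · exact hyx h.symm
    · exact hvx h.symm
  have hfx : ([x] : List V).filter p = [] := by
    simp [List.filter_cons, hpx]
  have hpy2 : p y = true := (hpmem y).mpr (Or.inl rfl)
  have hfyxy : ([y, x, y] : List V).filter p = [y, y] := by
    simp [List.filter_cons, hpy2, hpx]
  have htau' : Ql.filter p ++ Pl.filter p = [v] := by
    rw [← List.filter_append]; exact htau
  rw [filter_bigWord_raw, hfx, hfyxy]
  have hper : Ql.filter p ++ (Pl.filter p ++ ([y, y] ++
      (Ql.filter p ++ (Pl.filter p ++ ([] : List V))))) = [v, y, y, v] := by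
    rw [show Ql.filter p ++ (Pl.filter p ++ ([y, y] ++
        (Ql.filter p ++ (Pl.filter p ++ ([] : List V)))))
      = (Ql.filter p ++ Pl.filter p) ++ ([y, y] ++
        ((Ql.filter p ++ Pl.filter p) ++ ([] : List V))) by simp [List.append_assoc]]
    rw [htau']
    simp
  rw [hper]
  simp only [List.nil_append]
  calc k + 1 ≤ cnt (pw [v, y, y, v] (k + 1)) := cnt_pw_block hvy (k + 1)
    _ ≤ cnt ((gx x y (m ++ Pl)).filter p ++ pw [v, y, y, v] (k + 1)) := cnt_le_append _ _

lemma mem_bigWord_of_mem (hc : v ∈ m) : v ∈ bigWord x y m Pl Ql k := by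
  unfold bigWord
  exact List.mem_append.mpr (Or.inl (List.mem_append.mpr
    (Or.inl (mem_gx x y (List.mem_append.mpr (Or.inl hc))))))

lemma mem_bigWord_y : y ∈ bigWord x y m Pl Ql k := by
  unfold bigWord
  refine List.mem_append.mpr (Or.inr ?_)
  refine mem_pw ?_ k
  simp

end Construction

section Transport
variable {S : Set V}

lemma filter_and_of_imp (w : List V) (p q : V → Bool)
    (h : ∀ c, p c = true → q c = true) :
    w.filter (fun c => p c && q c) = w.filter p := by
  apply List.filter_congr
  intro c _
  by_cases hc : p c = true
  · simp [hc, h c hc]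
  · simp only [Bool.not_eq_true] at hc
    simp [hc]

lemma cnt_filter_map_val (l : List ↥S) (a b : ↥S) :
    cnt ((l.map Subtype.val).filter (fun c => decide (c = (a : V) ∨ c = (b : V))))
      = cnt (l.filter (fun c => decide (c = a ∨ c = b))) := by
  rw [List.filter_map]
  rw [cnt_map_inj Subtype.val_injective]
  congr 1
  apply List.filter_congr
  intro c _
  simp only [Function.comp]
  exact decide_eq_decide.mpr (by rw [Subtype.coe_inj, Subtype.coe_inj])

lemma map_val_filterMap (y : V) : ∀ w : List V,
    (w.filterMap (fun c => if h : c = y then none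
        else some (⟨c, h⟩ : {u : V | u ≠ y}))).map Subtype.val
      = w.filter (fun c => decide (c ≠ y))
  | [] => rfl
  | c :: t => by
    have ih := map_val_filterMap y t
    rw [List.filterMap_cons, List.filter_cons]
    by_cases h : c = y
    · simp only [h, dif_pos rfl]
      rw [if_neg (by simp)]
      exact ih
    · simp only [dif_neg h]
      rw [if_pos (by simp [h]), List.map_cons, ih]

end Transport

end K11

open K11 in
/-- if `y` is a vertex of degree 1 in `H` whose unique neighbour is `x`,
then `H` is `k`-11-representable iff `H \ y` is `k`-11-representable. -/
theorem k11Representable_addPendant {V : Type*} [DecidableEq V] [Fintype V] (k : ℕ)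
    (H : SimpleGraph V) (x y : V) (hadj : H.Adj x y)
    (hdeg : ∀ z : V, H.Adj y z → z = x) :
    K11Representable H k ↔ K11Representable (H.induce {u : V | u ≠ y}) k := by
  have hxy : x ≠ y := H.ne_of_adj hadj
  constructor
  · -- forward: restrict the word
    rintro ⟨w, hmem, hadjw⟩
    refine ⟨w.filterMap (fun c => if h : c = y then none
      else some (⟨c, h⟩ : {u : V | u ≠ y})), ?_, ?_⟩
    · -- membership
      intro v
      set u : List ↥{u : V | u ≠ y} := w.filterMap (fun c => if h : c = y then none
        else some (⟨c, h⟩ : {u : V | u ≠ y})) with hu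
      have hmap : u.map Subtype.val = w.filter (fun c => decide (c ≠ y)) :=
        map_val_filterMap y w
      have hvw : (v : V) ∈ u.map Subtype.val := by
        rw [hmap]
        exact List.mem_filter.mpr ⟨hmem v, decide_eq_true v.2⟩
      obtain ⟨c, hc, hcv⟩ := List.mem_map.mp hvw
      rwa [← Subtype.ext hcv]
    · -- adjacency
      intro a b hab
      set u : List ↥{u : V | u ≠ y} := w.filterMap (fun c => if h : c = y then none
        else some (⟨c, h⟩ : {u : V | u ≠ y})) with hu
      have hmap : u.map Subtype.val = w.filter (fun c => decide (c ≠ y)) :=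
        map_val_filterMap y w
      have hab' : (a : V) ≠ (b : V) := fun h => hab (Subtype.ext h)
      have hiff := hadjw a.val b.val hab'
      have hIA : (H.induce {u : V | u ≠ y}).Adj a b ↔ H.Adj ↑a ↑b := Iff.rfl
      rw [hIA, hiff, pattern11Count_eq_cnt, pattern11Count_eq_cnt]
      have hkey : cnt (w.filter (fun c => decide (c = (a : V) ∨ c = (b : V))))
          = cnt (u.filter (fun c => decide (c = a ∨ c = b))) := by
        rw [← cnt_filter_map_val u a b, hmap, List.filter_filter]
        congr 1
        refine (filter_and_of_imp w _ _ ?_).symm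
        intro c hc
        simp only [decide_eq_true_eq] at hc
        rcases hc with h | h
        · subst h; exact decide_eq_true a.2
        · subst h; exact decide_eq_true b.2
      rw [hkey]
  · -- backward : the big construction
    rintro ⟨u, hmemu, hadju⟩
    set m := u.map Subtype.val with hm
    have hym : y ∉ m := by
      intro h
      obtain ⟨c, _, hcy⟩ := List.mem_map.mp h
      exact c.2 hcy
    have hvm : ∀ v : V, v ≠ y → v ∈ m := by
      intro v hv
      exact List.mem_map.mpr ⟨⟨v, hv⟩, hmemu ⟨v, hv⟩, rfl⟩
    have hxm : x ∈ m := hvm x hxy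
    have hadjm : ∀ v w' : V, v ≠ y → w' ≠ y → v ≠ w' →
        (H.Adj v w' ↔ cnt (m.filter (fun c => decide (c = v ∨ c = w'))) ≤ k) := by
      intro v w' hv hw hvw
      have h1 := hadju ⟨v, hv⟩ ⟨w', hw⟩ (fun h => hvw (congrArg Subtype.val h))
      have hIA : (H.induce {u : V | u ≠ y}).Adj ⟨v, hv⟩ ⟨w', hw⟩ ↔ H.Adj v w' := Iff.rfl
      rw [hIA] at h1
      rw [h1, pattern11Count_eq_cnt]
      rw [hm, cnt_filter_map_val u ⟨v, hv⟩ ⟨w', hw⟩]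
    obtain ⟨Pl, Ql, hσ⟩ := List.append_of_mem (List.mem_dedup.mpr hxm)
    refine ⟨bigWord x y m Pl Ql k, ?_, ?_⟩
    · intro v
      by_cases hv : v = y
      · subst hv; exact mem_bigWord_y
      · exact mem_bigWord_of_mem (hvm v hv)
    · intro a b hab
      rw [pattern11Count_eq_cnt]
      by_cases hay : a = y
      · rw [hay]
        by_cases hbx : b = x
        · rw [hbx]
          have hsw : (fun c => decide (c = y ∨ c = x)) = (fun c => decide (c = x ∨ c = y)) := by
            funext c; exact decide_eq_decide.mpr or_comm
          refine iff_of_true hadj.symm ?_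
          rw [hsw, cnt_bigWord_xy hxy hσ hym]
          exact Nat.zero_le k
        · have hbyne : b ≠ y := fun h => hab (hay.trans h.symm)
          refine iff_of_false (fun h => hbx (hdeg b h)) ?_
          have hge := cnt_bigWord_yv (m := m) (Pl := Pl) (Ql := Ql) (k := k)
            (fun c => decide (c = y ∨ c = b)) hσ hym (hvm b hbyne) hbx hbyne
            (Ne.symm hxy) (fun c => by simp)
          omega
      · by_cases hby : b = y
        · rw [hby]
          by_cases hax : a = x
          · rw [hax]
            refine iff_of_true hadj ?_
            rw [cnt_bigWord_xy hxy hσ hym]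
            exact Nat.zero_le k
          · have hane : a ≠ y := hay
            refine iff_of_false (fun h => hax (hdeg a h.symm)) ?_
            have hsw : (fun c => decide (c = a ∨ c = y)) = (fun c => decide (c = y ∨ c = a)) := by
              funext c; exact decide_eq_decide.mpr or_comm
            rw [hsw]
            have hge := cnt_bigWord_yv (m := m) (Pl := Pl) (Ql := Ql) (k := k)
              (fun c => decide (c = y ∨ c = a)) hσ hym (hvm a hane) hax hane
              (Ne.symm hxy) (fun c => by simp)
            omega
        · -- both differ from y
          rw [hadjm a b hay hby hab]
          rw [cnt_bigWord_pair (fun c => decide (c = a ∨ c = b)) hσ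
            (by simp [Ne.symm hay, Ne.symm hby])
            (hvm a hay) (hvm b hby) hab (fun c => by simp)]
end

section
/- Let k ≥ 0 and let G be a simple graph having two distinct vertices x and y (which may or may not be adjacent) whose neighbourhoods coincide after removing x and y, i.e., N(x) \ {x, y} = N(y) \ {x, y}. Then G is k-11-representable if and only if the induced subgraph G \ x is k-11-representable. -/
namespace K11Aux
variable {V : Type*} [DecidableEq V]

lemma p11_nil : pattern11Count ([] : List V) = 0 := rfl
lemma p11_single (a : V) : pattern11Count [a] = 0 := rfl

lemma p11_cons_cons (a b : V) (l : List V) :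
    pattern11Count (a :: b :: l) = (if a = b then 1 else 0) + pattern11Count (b :: l) := by
  simp [pattern11Count, List.countP_cons]; omega

/-- junction count -/
def junct (l m : List V) : ℕ :=
  match l.getLast?, m.head? with
  | some a, some b => if a = b then 1 else 0
  | _, _ => 0

lemma p11_cons (a : V) (l : List V) :
    pattern11Count (a :: l) =
      (match l.head? with | some b => if a = b then 1 else 0 | none => 0) + pattern11Count l := by
  cases l with
  | nil => simp [p11_nil, p11_single]
  | cons b t => simp [p11_cons_cons]

lemma p11_append (l m : List V) :
    pattern11Count (l ++ m) = pattern11Count l + junct l m + pattern11Count m := by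
  induction l with
  | nil => simp [p11_nil, junct]
  | cons a t ih =>
    rw [List.cons_append, p11_cons, ih, p11_cons a t]
    cases t with
    | nil =>
      simp only [List.nil_append, List.head?_nil, p11_nil, junct, List.getLast?_singleton,
        List.getLast?_nil]
      cases hm : m.head? with
      | none => simp
      | some b => simp only [List.head?_cons]; omega
    | cons c t' =>
      have hj : junct (a :: c :: t') m = junct (c :: t') m := by
        simp [junct, List.getLast?_cons_cons]
      rw [hj]
      simp only [List.cons_append, List.head?_cons]
      omega

lemma p11_nodup {l : List V} (h : l.Nodup) : pattern11Count l = 0 := by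
  induction l with
  | nil => rfl
  | cons a t ih =>
    rw [p11_cons]
    have h1 : a ∉ t := (List.nodup_cons.mp h).1
    have h2 := ih (List.nodup_cons.mp h).2
    cases ht : t.head? with
    | none => simpa using h2
    | some b =>
      have hb : b ∈ t := by
        cases t with
        | nil => simp at ht
        | cons c t' => simp at ht; subst ht; exact List.mem_cons_self
      have : a ≠ b := fun hab => h1 (hab ▸ hb)
      simp [this, h2]

lemma p11_map {W : Type*} [DecidableEq W] (f : V → W) :
    ∀ (l : List V), (∀ a ∈ l, ∀ b ∈ l, f a = f b → a = b) →
    pattern11Count (l.map f) = pattern11Count l := by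
  intro l
  induction l with
  | nil => intro _; rfl
  | cons a t ih =>
    intro h
    cases t with
    | nil => rfl
    | cons b t' =>
      simp only [List.map_cons] at *
      rw [p11_cons_cons, p11_cons_cons]
      have hih := ih (fun c hc d hd => h c (List.mem_cons_of_mem _ hc) d (List.mem_cons_of_mem _ hd))
      rw [hih]
      congr 1
      by_cases hab : a = b
      · simp [hab]
      · have : f a ≠ f b := fun hfe => hab (h a (by simp) b (by simp) hfe)
        simp [hab, this]

lemma getLast?_filter_dedup (P : V → Bool) :
    ∀ (u : List V), u.filter P ≠ [] →
      (u.dedup.filter P).getLast? = (u.filter P).getLast? := by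
  intro u
  induction u with
  | nil => intro h; simp at h
  | cons a l ih =>
    intro h
    by_cases hmem : a ∈ l
    · rw [List.dedup_cons_of_mem hmem]
      by_cases hPa : P a
      · have hfl : l.filter P ≠ [] := by
          intro he
          have : a ∈ l.filter P := List.mem_filter.mpr ⟨hmem, hPa⟩
          rw [he] at this; simp at this
        rw [List.filter_cons_of_pos hPa]
        rw [ih hfl]
        cases hfe : l.filter P with
        | nil => exact absurd hfe hfl
        | cons c t => simp [List.getLast?_cons_cons]
      · rw [List.filter_cons_of_neg (by simpa using hPa)] at h ⊢
        exact ih h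
    · rw [List.dedup_cons_of_notMem hmem]
      by_cases hPa : P a
      · rw [List.filter_cons_of_pos hPa, List.filter_cons_of_pos hPa]
        by_cases hfl : l.filter P = []
        · have hfd : l.dedup.filter P = [] := by
            rw [List.filter_eq_nil_iff] at hfl ⊢
            intro c hc
            exact hfl c (List.mem_dedup.mp hc)
          rw [hfl, hfd]
        · have hfd : l.dedup.filter P ≠ [] := by
            intro he
            apply hfl
            rw [List.filter_eq_nil_iff] at he ⊢
            intro c hc hPc
            exact he c (List.mem_dedup.mpr hc) hPc
          cases hfe : l.filter P with
          | nil => exact absurd hfe hfl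
          | cons c t =>
            cases hfe2 : l.dedup.filter P with
            | nil => exact absurd hfe2 hfd
            | cons c' t' =>
              rw [List.getLast?_cons_cons, List.getLast?_cons_cons, ← hfe2, ← hfe, ih hfl]
      · rw [List.filter_cons_of_neg (by simpa using hPa)] at h ⊢
        rw [List.filter_cons_of_neg (by simpa using hPa)]
        exact ih h

lemma head?_ne_getLast? {l : List V} (h : l.Nodup) (hl : 2 ≤ l.length) :
    l.head? ≠ l.getLast? := by
  cases l with
  | nil => simp at hl
  | cons c t =>
    cases t with
    | nil => simp at hl
    | cons d t' =>
      rw [List.head?_cons, List.getLast?_cons_cons]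
      have hc : c ∉ d :: t' := (List.nodup_cons.mp h).1
      intro he
      have : (d :: t').getLast? = some c := he.symm
      have hmem : c ∈ d :: t' := by
        obtain ⟨hne', hc'⟩ :=
          List.mem_getLast?_eq_getLast (l := d :: t') (x := c) (Option.mem_def.mpr this)
        exact hc' ▸ List.getLast_mem hne'
      exact hc hmem

lemma two_le_length {l : List V} {a b : V} (ha : a ∈ l) (hb : b ∈ l) (hab : a ≠ b) :
    2 ≤ l.length := by
  cases l with
  | nil => simp at ha
  | cons c t =>
    cases t with
    | nil => simp at ha hb; exact absurd (ha.trans hb.symm) hab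
    | cons d t' => simp [List.length_cons]


lemma junct_eq_zero {L D : List V} (h : D.head? ≠ L.getLast?) : junct L D = 0 := by
  unfold junct
  cases hL : L.getLast? with
  | none => rfl
  | some c =>
    cases hD : D.head? with
    | none => rfl
    | some d =>
      rw [hL, hD] at h
      have : d ≠ c := fun he => h (by rw [he])
      simp [Ne.symm this]

/-- padding: append dedup n times -/
def pad (u : List V) : ℕ → List V
  | 0 => u
  | n+1 => pad u n ++ (pad u n).dedup

lemma mem_pad {u : List V} {v : V} (h : v ∈ u) : ∀ n, v ∈ pad u n
  | 0 => h
  | n+1 => List.mem_append.mpr (Or.inl (mem_pad h n))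

lemma mem_of_mem_pad {u : List V} {v : V} : ∀ n, v ∈ pad u n → v ∈ u
  | 0, h => h
  | n+1, h => by
    rcases List.mem_append.mp h with h' | h'
    · exact mem_of_mem_pad n h'
    · exact mem_of_mem_pad n (List.mem_dedup.mp h')

lemma count_pad {u : List V} {v : V} (h : v ∈ u) : ∀ n, u.count v + n ≤ (pad u n).count v
  | 0 => le_refl _
  | n+1 => by
    have h1 := count_pad h n
    have h2 : (pad u n).dedup.count v = 1 := by
      rw [List.count_dedup]
      simp [mem_pad h n]
    simp only [pad, List.count_append, h2]
    omega

lemma p11_filter_pad {u : List V} {a b : V} (ha : a ∈ u) (hb : b ∈ u) (hab : a ≠ b) :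
    ∀ n, pattern11Count ((pad u n).filter (fun c => decide (c = a ∨ c = b))) =
      pattern11Count (u.filter (fun c => decide (c = a ∨ c = b))) := by
  intro n
  induction n with
  | zero => rfl
  | succ n ih =>
    set P : V → Bool := fun c => decide (c = a ∨ c = b) with hP
    set w := pad u n with hw
    have haw : a ∈ w := mem_pad ha n
    have hbw : b ∈ w := mem_pad hb n
    have hPa : P a = true := by simp [hP]
    have hPb : P b = true := by simp [hP]
    have hL : w.filter P ≠ [] := by
      intro he
      have : a ∈ w.filter P := List.mem_filter.mpr ⟨haw, hPa⟩
      rw [he] at this; simp at this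
    have hDnd : (w.dedup.filter P).Nodup := (List.nodup_dedup w).filter P
    have haD : a ∈ w.dedup.filter P := List.mem_filter.mpr ⟨List.mem_dedup.mpr haw, hPa⟩
    have hbD : b ∈ w.dedup.filter P := List.mem_filter.mpr ⟨List.mem_dedup.mpr hbw, hPb⟩
    have hlen : 2 ≤ (w.dedup.filter P).length := two_le_length haD hbD hab
    have hhl : (w.dedup.filter P).head? ≠ (w.dedup.filter P).getLast? :=
      head?_ne_getLast? hDnd hlen
    have hgl : (w.dedup.filter P).getLast? = (w.filter P).getLast? :=
      getLast?_filter_dedup P w hL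
    show pattern11Count ((w ++ w.dedup).filter P) = _
    rw [List.filter_append, p11_append, p11_nodup hDnd,
      junct_eq_zero (by rw [← hgl]; exact hhl)]
    simpa using ih

/-- the block inserted for each occurrence of `y` -/
def blockOf (x y : V) (b : Bool) : List V := if b then [x, y] else [y, x]

/-- insert `x` next to each occurrence of `y`, side controlled by `b`, updated by `f` -/
def ins (x y : V) (f : Bool → Bool) : Bool → List V → List V
  | _, [] => []
  | b, v :: l =>
    (if v = y then blockOf x y b else [v]) ++ ins x y f (if v = y then f b else b) l

lemma mem_ins (x y : V) (f : Bool → Bool) {v : V} :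
    ∀ (u : List V) (b : Bool), v ∈ u → v ∈ ins x y f b u
  | [], _, h => by simp at h
  | c :: l, b, h => by
    rcases List.mem_cons.mp h with h' | h'
    · subst h'
      by_cases hvy : v = y
      · subst hvy
        simp only [ins, if_pos rfl, List.mem_append]
        left
        cases b <;> simp [blockOf]
      · simp only [ins, if_neg hvy, List.mem_append]
        left; simp
    · simp only [ins, List.mem_append]
      right
      exact mem_ins x y f l _ h'

lemma x_mem_ins (x y : V) (f : Bool → Bool) :
    ∀ (u : List V) (b : Bool), y ∈ u → x ∈ ins x y f b u
  | [], _, h => by simp at h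
  | c :: l, b, h => by
    rcases List.mem_cons.mp h with h' | h'
    · subst h'
      simp only [ins, if_pos rfl, List.mem_append]
      left
      cases b <;> simp [blockOf]
    · by_cases hcy : c = y
      · subst hcy
        simp only [ins, if_pos rfl, List.mem_append]
        left
        cases b <;> simp [blockOf]
      · simp only [ins, if_neg hcy, List.mem_append]
        right
        exact x_mem_ins x y f l _ h'

lemma filter_block_other (x y : V) {P : V → Bool} (hPx : P x = false) (b : Bool) :
    (blockOf x y b).filter P = [y].filter P := by
  cases b <;> simp [blockOf, List.filter_cons, hPx]

lemma filter_ins_other (x y : V) (f : Bool → Bool) {P : V → Bool} (hPx : P x = false) :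
    ∀ (u : List V) (b : Bool), (ins x y f b u).filter P = u.filter P
  | [], _ => rfl
  | v :: l, b => by
    simp only [ins, List.filter_append]
    rw [filter_ins_other x y f hPx l]
    by_cases hvy : v = y
    · subst hvy
      rw [if_pos rfl, filter_block_other x v hPx b, ← List.filter_append,
        List.singleton_append]
    · rw [if_neg hvy, ← List.filter_append, List.singleton_append]

lemma filter_ins_xz (x y z : V) (f : Bool → Bool) (hzx : z ≠ x) (hzy : z ≠ y) (hxy : x ≠ y) :
    ∀ (u : List V) (b : Bool), x ∉ u →
      (ins x y f b u).filter (fun a => decide (a = x ∨ a = z)) =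
        (u.filter (fun a => decide (a = y ∨ a = z))).map (fun v => if v = y then x else v)
  | [], _, _ => rfl
  | v :: l, b, hx => by
    have hxl : x ∉ l := fun h => hx (List.mem_cons_of_mem _ h)
    have hvx : v ≠ x := fun h => hx (h ▸ List.mem_cons_self)
    simp only [ins, List.filter_append, List.filter_cons]
    rw [filter_ins_xz x y z f hzx hzy hxy l _ hxl]
    by_cases hvy : v = y
    · subst hvy
      rw [if_pos rfl]
      have h1 : (blockOf x v b).filter (fun a => decide (a = x ∨ a = z)) = [x] := by
        cases b <;> simp [blockOf, List.filter_cons, Ne.symm hxy, Ne.symm hzy, Ne.symm hzx]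
      rw [h1]
      simp
    · rw [if_neg hvy]
      by_cases hvz : v = z
      · subst hvz
        simp [hzx, Ne.symm hvy, hvy]
      · have h1 : ¬(v = x ∨ v = z) := by tauto
        have h2 : ¬(v = y ∨ v = z) := by tauto
        simp [h1, h2]

/-- alternating word over x,y -/
def alt (x y : V) (f : Bool → Bool) : Bool → ℕ → List V
  | _, 0 => []
  | b, m+1 => blockOf x y b ++ alt x y f (f b) m

lemma filter_ins_xy (x y : V) (f : Bool → Bool) (hxy : x ≠ y) :
    ∀ (u : List V) (b : Bool), x ∉ u →
      (ins x y f b u).filter (fun a => decide (a = x ∨ a = y)) = alt x y f b (u.count y)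
  | [], _, _ => rfl
  | v :: l, b, hx => by
    have hxl : x ∉ l := fun h => hx (List.mem_cons_of_mem _ h)
    have hvx : v ≠ x := fun h => hx (h ▸ List.mem_cons_self)
    simp only [ins, List.filter_append]
    rw [filter_ins_xy x y f hxy l _ hxl]
    by_cases hvy : v = y
    · subst hvy
      rw [if_pos rfl, List.count_cons_self]
      have h1 : (blockOf x v b).filter (fun a => decide (a = x ∨ a = v)) = blockOf x v b := by
        cases b <;> simp [blockOf, List.filter_cons]
      rw [h1, if_pos rfl]
      rfl
    · rw [if_neg hvy, if_neg hvy, List.count_cons_of_ne hvy]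
      have h1 : [v].filter (fun a => decide (a = x ∨ a = y)) = [] := by
        simp [List.filter_cons, hvx, hvy]
      rw [h1, List.nil_append]

lemma head?_alt (x y : V) (f : Bool → Bool) (b : Bool) (m : ℕ) :
    (alt x y f b (m+1)).head? = some (if b then x else y) := by
  cases b <;> simp [alt, blockOf]

lemma getLast?_blockOf (x y : V) (b : Bool) :
    (blockOf x y b).getLast? = some (if b then y else x) := by
  cases b <;> simp [blockOf]

lemma p11_blockOf (x y : V) (hxy : x ≠ y) (b : Bool) :
    pattern11Count (blockOf x y b) = 0 := by
  cases b <;> simp [blockOf, p11_cons_cons, p11_single, hxy, Ne.symm hxy]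

lemma p11_alt_id (x y : V) (hxy : x ≠ y) (b : Bool) :
    ∀ m, pattern11Count (alt x y id b m) = 0
  | 0 => rfl
  | m+1 => by
    show pattern11Count (blockOf x y b ++ alt x y id b m) = 0
    rw [p11_append, p11_blockOf x y hxy, p11_alt_id x y hxy b m]
    cases m with
    | zero => simp [junct, alt, getLast?_blockOf]
    | succ m' =>
      have hj : junct (blockOf x y b) (alt x y id b (m'+1)) = 0 := by
        apply junct_eq_zero
        rw [head?_alt, getLast?_blockOf]
        cases b <;> simp [hxy, Ne.symm hxy]
      omega

lemma p11_alt_not (x y : V) (hxy : x ≠ y) :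
    ∀ (m : ℕ) (b : Bool), pattern11Count (alt x y not b (m+1)) = m
  | 0, b => by
    show pattern11Count (blockOf x y b ++ alt x y not (!b) 0) = 0
    show pattern11Count (blockOf x y b ++ []) = 0
    rw [List.append_nil]
    exact p11_blockOf x y hxy b
  | m+1, b => by
    show pattern11Count (blockOf x y b ++ alt x y not (!b) (m+1)) = m + 1
    rw [p11_append, p11_blockOf x y hxy, p11_alt_not x y hxy m (!b)]
    have hj : junct (blockOf x y b) (alt x y not (!b) (m+1)) = 1 := by
      unfold junct
      rw [head?_alt, getLast?_blockOf]
      cases b <;> simp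
    omega


lemma filter_map_val {S : Set V} [DecidableEq S] (w' : List S) (a b : S) :
    (w'.map Subtype.val).filter (fun v => decide (v = ↑a ∨ v = ↑b)) =
      (w'.filter (fun c => decide (c = a ∨ c = b))).map Subtype.val := by
  rw [List.filter_map]
  congr 1
  apply List.filter_congr
  intro c _
  simp [Subtype.ext_iff]

lemma p11_subtype {S : Set V} [DecidableEq S] (w' : List S) (a b : S) :
    pattern11Count ((w'.map Subtype.val).filter (fun v => decide (v = ↑a ∨ v = ↑b))) =
      pattern11Count (w'.filter (fun c => decide (c = a ∨ c = b))) := by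
  rw [filter_map_val]
  exact p11_map Subtype.val _ (fun c _ d _ h => Subtype.ext h)


lemma filter_filter_of_imp {p q : V → Bool} (h : ∀ v, p v = true → q v = true) (w : List V) :
    (w.filter q).filter p = w.filter p := by
  rw [List.filter_filter]
  apply List.filter_congr
  intro v _
  by_cases hp : p v
  · simp [hp, h v hp]
  · simp [hp]

lemma map_val_filterMap (x : V) (w : List V) :
    ((w.filterMap (fun v => if h : v = x then none
        else some (⟨v, h⟩ : {u : V | u ≠ x}))).map Subtype.val) =
      w.filter (fun v => !decide (v = x)) := by
  induction w with
  | nil => rfl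
  | cons a t ih =>
    by_cases h : a = x
    · simp only [List.filterMap_cons, dif_pos h]
      rw [ih, List.filter_cons_of_neg (by simp [h])]
    · simp only [List.filterMap_cons, dif_neg h]
      rw [List.map_cons, ih, List.filter_cons_of_pos (by simp [h])]

end K11Aux

lemma twin_construct {V : Type*} [DecidableEq V] (k : ℕ) (G : SimpleGraph V) (x y : V)
    (hne : x ≠ y) (hN : ∀ z : V, z ≠ x → z ≠ y → (G.Adj x z ↔ G.Adj y z))
    (f : Bool → Bool) (u1 : List V)
    (hu1_mem : ∀ v : V, v ≠ x → v ∈ u1) (hxu1 : x ∉ u1) (hyu1 : y ∈ u1)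
    (hcount : k + 2 ≤ u1.count y)
    (hu1_pair : ∀ a b : V, a ≠ x → b ≠ x → a ≠ b →
      (G.Adj a b ↔ pattern11Count (u1.filter (fun v => decide (v = a ∨ v = b))) ≤ k))
    (hf : (f = id ∧ G.Adj x y) ∨ (f = Bool.not ∧ ¬ G.Adj x y)) :
    K11Representable G k := by
  refine ⟨K11Aux.ins x y f true u1, ?_, ?_⟩
  · intro v
    by_cases hvx : v = x
    · subst hvx; exact K11Aux.x_mem_ins v y f u1 true hyu1
    · exact K11Aux.mem_ins x y f u1 true (hu1_mem v hvx)
  · set w : List V := K11Aux.ins x y f true u1 with hw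
    have hsym : ∀ p q : V, w.filter (fun a => decide (a = p ∨ a = q)) =
        w.filter (fun a => decide (a = q ∨ a = p)) := by
      intro p q
      apply List.filter_congr
      intro c _
      exact decide_eq_decide.mpr or_comm
    have hmain : ∀ q : V, q ≠ x →
        (G.Adj x q ↔ pattern11Count (w.filter (fun a => decide (a = x ∨ a = q))) ≤ k) := by
      intro q hqx
      by_cases hqy : q = y
      · subst hqy
        rw [hw, K11Aux.filter_ins_xy x q f hne u1 true hxu1]
        rcases hf with ⟨hfi, hadj⟩ | ⟨hfi, hadj⟩
        · subst hfi
          rw [K11Aux.p11_alt_id x q hne true (u1.count q)]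
          simp [hadj]
        · subst hfi
          obtain ⟨m, hm⟩ : ∃ m, u1.count q = m + 1 := ⟨u1.count q - 1, by omega⟩
          rw [hm, K11Aux.p11_alt_not x q hne m true]
          have hmk : ¬ (m ≤ k) := by omega
          simp [hadj, hmk]
      · rw [hw, K11Aux.filter_ins_xz x y q f hqx hqy hne u1 true hxu1,
          K11Aux.p11_map]
        · rw [hN q hqx hqy]
          exact hu1_pair y q (Ne.symm hne) hqx (Ne.symm hqy)
        · intro a ha b hb hab
          have ha' : a = y ∨ a = q := by simpa using (List.mem_filter.mp ha).2
          have hb' : b = y ∨ b = q := by simpa using (List.mem_filter.mp hb).2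
          rcases ha' with rfl | rfl <;> rcases hb' with rfl | rfl
          · rfl
          · simp only [if_pos rfl, if_neg hqy] at hab
            exact absurd hab.symm hqx
          · simp only [if_pos rfl, if_neg hqy] at hab
            exact absurd hab hqx
          · rfl
    intro p q hpq
    by_cases hpx : p = x
    · subst hpx
      exact hmain q (Ne.symm hpq)
    · by_cases hqx : q = x
      · subst hqx
        rw [hsym p q, G.adj_comm]
        exact hmain p hpx
      · have hPx : (fun a => decide (a = p ∨ a = q)) x = false := by
          simp [Ne.symm hpx, Ne.symm hqx]
        rw [hw, K11Aux.filter_ins_other x y f hPx u1 true]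
        exact hu1_pair p q hpx hqx hpq


/-- if two distinct vertices `x` and `y` (possibly adjacent) have the same
neighbourhoods up to removing `x` and `y`, then `G` is `k`-11-representable iff
`G \ x` is `k`-11-representable. -/
theorem k11Representable_twin {V : Type*} [DecidableEq V] [Fintype V] (k : ℕ)
    (G : SimpleGraph V) (x y : V) (hne : x ≠ y)
    (hN : ∀ z : V, z ≠ x → z ≠ y → (G.Adj x z ↔ G.Adj y z)) :
    K11Representable G k ↔ K11Representable (G.induce {u : V | u ≠ x}) k := by

  classical
  constructor
  · rintro ⟨w, hmem, hpair⟩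
    refine ⟨w.filterMap (fun v => if h : v = x then none
        else some (⟨v, h⟩ : {u : V | u ≠ x})), ?_, ?_⟩
    · intro v
      refine List.mem_filterMap.mpr ⟨v, hmem v, ?_⟩
      rw [dif_neg v.2]
    · intro a b hab
      have hab' : (a : V) ≠ (b : V) := fun h => hab (Subtype.ext h)
      have hadj : (G.induce {u : V | u ≠ x}).Adj a b ↔ G.Adj a b := Iff.rfl
      rw [hadj, hpair _ _ hab', ← K11Aux.p11_subtype, K11Aux.map_val_filterMap,
        K11Aux.filter_filter_of_imp]
      intro v hv
      have hv' : v = ↑a ∨ v = ↑b := by simpa using hv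
      rcases hv' with h | h
      · subst h
        have ha2 : (a : V) ≠ x := a.2
        simp [ha2]
      · subst h
        have hb2 : (b : V) ≠ x := b.2
        simp [hb2]
  · rintro ⟨w', hmem', hpair'⟩
    set u : List V := w'.map Subtype.val with hu
    have hu_mem : ∀ v : V, v ≠ x → v ∈ u := fun v hv =>
      List.mem_map.mpr ⟨⟨v, hv⟩, hmem' _, rfl⟩
    have hxu : x ∉ u := by
      intro h
      rcases List.mem_map.mp h with ⟨c, _, hc⟩
      exact c.2 hc
    have hu_pair : ∀ a b : V, a ≠ x → b ≠ x → a ≠ b →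
        (G.Adj a b ↔ pattern11Count (u.filter (fun v => decide (v = a ∨ v = b))) ≤ k) := by
      intro a b hax hbx hab
      have h := hpair' ⟨a, hax⟩ ⟨b, hbx⟩ (fun h => hab (congrArg Subtype.val h))
      rw [hu, K11Aux.p11_subtype w' ⟨a, hax⟩ ⟨b, hbx⟩]
      exact h
    set u1 := K11Aux.pad u (k+2) with hu1
    have hu1_mem : ∀ v : V, v ≠ x → v ∈ u1 := fun v hv => K11Aux.mem_pad (hu_mem v hv) _
    have hxu1 : x ∉ u1 := fun h => hxu (K11Aux.mem_of_mem_pad _ h)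
    have hyu1 : y ∈ u1 := hu1_mem y (Ne.symm hne)
    have hcount : k + 2 ≤ u1.count y := by
      have h1 : 0 < u.count y := List.count_pos_iff.mpr (hu_mem y (Ne.symm hne))
      have h2 : u.count y + (k+2) ≤ u1.count y :=
        K11Aux.count_pad (hu_mem y (Ne.symm hne)) (k+2)
      omega
    have hu1_pair : ∀ a b : V, a ≠ x → b ≠ x → a ≠ b →
        (G.Adj a b ↔ pattern11Count (u1.filter (fun v => decide (v = a ∨ v = b))) ≤ k) := by
      intro a b hax hbx hab
      rw [hu1, K11Aux.p11_filter_pad (hu_mem a hax) (hu_mem b hbx) hab]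
      exact hu_pair a b hax hbx hab
    -- choose the flip function according to adjacency of x and y
    by_cases hadj : G.Adj x y
    case pos =>
      exact twin_construct k G x y hne hN id u1 hu1_mem hxu1 hyu1 hcount hu1_pair
        (Or.inl ⟨rfl, hadj⟩)
    case neg =>
      exact twin_construct k G x y hne hN Bool.not u1 hu1_mem hxu1 hyu1 hcount hu1_pair
        (Or.inr ⟨rfl, hadj⟩)
end

section
/- Let k ≥ 0 and let G be a simple graph whose vertex set is the union of two sets V₁ and V₂ with V₁ ∩ V₂ = {z} for a single vertex z, such that G has no edge joining a vertex of V₁ \ {z} to a vertex of V₂ \ {z}. If the induced subgraphs G[V₁] and G[V₂] are both k-11-representable, then G is k-11-representable. (In other words, glueing two k-11-representable graphs at a single vertex yields a k-11-representable graph.) -/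
set_option linter.unusedSectionVars false
set_option linter.unusedVariables false
set_option maxHeartbeats 1000000

namespace K11Glue
variable {α : Type*} [DecidableEq α]
variable {α : Type*} [DecidableEq α]

theorem p11_nil : pattern11Count ([] : List α) = 0 := rfl
theorem p11_single (a : α) : pattern11Count [a] = 0 := rfl

theorem p11_cons₂ (a b : α) (l : List α) :
    pattern11Count (a :: b :: l) = pattern11Count (b :: l) + (if a = b then 1 else 0) := by
  simp [pattern11Count, List.countP_cons]

/-- the contribution of the junction point when concatenating two words -/
def glue (u v : List α) : ℕ := if u.getLast?.isSome ∧ u.getLast? = v.head? then 1 else 0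

theorem glue_nil_right (u : List α) : glue u [] = 0 := by
  unfold glue
  rcases h : u.getLast? with _ | a <;> simp [h]

theorem glue_eq_zero {u v : List α} (h : u.getLast? ≠ v.head?) : glue u v = 0 := by
  unfold glue
  simp [h]

theorem glue_congr {u u' v v' : List α} (h1 : u.getLast? = u'.getLast?)
    (h2 : v.head? = v'.head?) : glue u v = glue u' v' := by
  unfold glue
  rw [h1, h2]

theorem p11_append : ∀ u v : List α,
    pattern11Count (u ++ v) = pattern11Count u + pattern11Count v + glue u v
  | [], v => by simp [glue, p11_nil]
  | [a], v => by
      cases v with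
      | nil => simp [glue_nil_right, p11_single, p11_nil]
      | cons c t => simp [glue, p11_cons₂, p11_single]
  | a :: b :: u, v => by
      have ih := p11_append (b :: u) v
      have hg : glue (a :: b :: u) v = glue (b :: u) v :=
        glue_congr List.getLast?_cons_cons rfl
      simp only [List.cons_append, p11_cons₂] at *
      rw [ih, hg]
      omega

theorem le_p11_append (u v : List α) :
    pattern11Count u + pattern11Count v ≤ pattern11Count (u ++ v) := by
  rw [p11_append]; omega

theorem p11_map {β : Type*} [DecidableEq β] (f : α → β) (hf : Function.Injective f) :
    ∀ l : List α, pattern11Count (l.map f) = pattern11Count l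
  | [] => rfl
  | [a] => rfl
  | a :: b :: l => by
      have ih := p11_map f hf (b :: l)
      simp only [List.map_cons] at *
      rw [p11_cons₂, p11_cons₂, ih]
      congr 1
      simp [hf.eq_iff]

theorem p11_nodup : ∀ {l : List α}, l.Nodup → pattern11Count l = 0
  | [], _ => rfl
  | [a], _ => rfl
  | a :: b :: l, h => by
      have h1 : a ≠ b := by simp only [List.nodup_cons, List.mem_cons] at h; tauto
      have h2 : (b :: l).Nodup := h.of_cons
      rw [p11_cons₂, p11_nodup h2, if_neg h1]

theorem filter_dedup (p : α → Bool) : ∀ l : List α, (l.filter p).dedup = l.dedup.filter p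
  | [] => rfl
  | a :: l => by
      by_cases hm : a ∈ l
      · rw [List.dedup_cons_of_mem hm]
        cases hp : p a with
        | false => rw [List.filter_cons_of_neg (by simp [hp]), filter_dedup p l]
        | true =>
            rw [List.filter_cons_of_pos (by simp [hp]),
              List.dedup_cons_of_mem (List.mem_filter.2 ⟨hm, hp⟩), filter_dedup p l]
      · rw [List.dedup_cons_of_notMem hm]
        cases hp : p a with
        | false =>
            rw [List.filter_cons_of_neg (by simp [hp]),
              List.filter_cons_of_neg (by simp [hp]), filter_dedup p l]
        | true =>
            rw [List.filter_cons_of_pos (by simp [hp]),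
              List.filter_cons_of_pos (by simp [hp]),
              List.dedup_cons_of_notMem (fun hc => hm (List.mem_of_mem_filter hc)),
              filter_dedup p l]

theorem getLast?_cons_of_ne_nil {a : α} {l : List α} (h : l ≠ []) :
    (a :: l).getLast? = l.getLast? := by
  cases l with
  | nil => exact absurd rfl h
  | cons b t => exact List.getLast?_cons_cons

theorem getLast?_dedup : ∀ l : List α, l.dedup.getLast? = l.getLast?
  | [] => rfl
  | a :: l => by
      by_cases hm : a ∈ l
      · rw [List.dedup_cons_of_mem hm, getLast?_dedup l,
          getLast?_cons_of_ne_nil (List.ne_nil_of_mem hm)]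
      · rw [List.dedup_cons_of_notMem hm]
        cases hl : l with
        | nil => simp
        | cons c t =>
            have hld : l.dedup ≠ [] := by
              rw [Ne, List.dedup_eq_nil, hl]
              simp
            rw [← hl]
            rw [getLast?_cons_of_ne_nil hld, getLast?_dedup l,
              getLast?_cons_of_ne_nil (by simp [hl])]

theorem filter_flatten_replicate (p : α → Bool) (L : List α) :
    ∀ n, ((List.replicate n L).flatten).filter p = (List.replicate n (L.filter p)).flatten := by
  intro n
  induction n with
  | zero => rfl
  | succ n ih => simp [List.replicate_succ, List.filter_append, ih]

theorem head?_flatten_replicate {L : List α} (hL : L ≠ []) {n : ℕ} (hn : n ≠ 0) :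
    ((List.replicate n L).flatten).head? = L.head? := by
  cases n with
  | zero => exact absurd rfl hn
  | succ n =>
      rw [List.replicate_succ, List.flatten_cons, List.head?_append]
      cases L with
      | nil => exact absurd rfl hL
      | cons a t => rfl

theorem getLast?_flatten_replicate {L : List α} (hL : L ≠ []) {n : ℕ} (hn : n ≠ 0) :
    ((List.replicate n L).flatten).getLast? = L.getLast? := by
  cases n with
  | zero => exact absurd rfl hn
  | succ n =>
      rw [List.replicate_succ', List.flatten_concat, List.getLast?_append]
      cases h : L.getLast? with
      | none => simp [List.getLast?_eq_none_iff] at h; exact absurd h hL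
      | some a => rfl

theorem count_flatten_replicate (a : α) (L : List α) :
    ∀ n, ((List.replicate n L).flatten).count a = n * L.count a := by
  intro n
  induction n with
  | zero => simp
  | succ n ih => simp [List.replicate_succ, List.count_append, ih]; ring

theorem p11_flatten_replicate_zero {L : List α} (hL : pattern11Count L = 0)
    (hg : L.getLast? ≠ L.head?) :
    ∀ n, pattern11Count ((List.replicate n L).flatten) = 0 := by
  intro n
  have hLne : L ≠ [] ∨ L = [] := (em _).symm.imp id id
  rcases hLne with hLne | rfl
  · induction n with
    | zero => rfl
    | succ n ih =>
        rw [List.replicate_succ, List.flatten_cons, p11_append, hL, ih]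
        cases n with
        | zero => simp [glue_nil_right]
        | succ n =>
            rw [glue_eq_zero (by rw [head?_flatten_replicate hLne (Nat.succ_ne_zero n)]; exact hg)]
  · induction n with
    | zero => rfl
    | succ n ih => simpa [List.replicate_succ]
   
theorem p11_flatten_replicate_ge (L : List α) :
    ∀ n, n * pattern11Count L ≤ pattern11Count ((List.replicate n L).flatten) := by
  intro n
  induction n with
  | zero => simp
  | succ n ih =>
      rw [List.replicate_succ, List.flatten_cons]
      calc (n+1) * pattern11Count L = pattern11Count L + n * pattern11Count L := by ring
      _ ≤ pattern11Count L + pattern11Count ((List.replicate n L).flatten) := by omega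
      _ ≤ _ := le_p11_append _ _

-- the key "safe append" lemma
theorem p11_safe (U D P : List α) (hne : U ≠ []) (hD : D.Nodup) (hlen : 2 ≤ D.length)
    (hlast : U.getLast? = D.getLast?) (hP : P <+: D) {a : ℕ} (ha : a ≠ 0) :
    pattern11Count (U ++ (List.replicate a D).flatten ++ P) = pattern11Count U := by
  have hDne : D ≠ [] := by intro h; rw [h] at hlen; simp at hlen
  have hhl : D.head? ≠ D.getLast? := by
    cases D with
    | nil => simp at hlen
    | cons c t =>
        cases t with
        | nil => simp at hlen
        | cons e t' =>
            rw [List.head?_cons, List.getLast?_cons_cons]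
            intro hc
            have : c ∈ e :: t' := by
              have := List.getLast?_eq_some_iff.1 hc.symm
              rcases this with ⟨ys, hys⟩
              rw [hys]; simp
            simp only [List.nodup_cons] at hD
            exact hD.1 this
  have key : pattern11Count (U ++ (List.replicate a D).flatten) = pattern11Count U ∧
      (U ++ (List.replicate a D).flatten).getLast? = D.getLast? := by
    constructor
    · rw [p11_append, p11_flatten_replicate_zero (p11_nodup hD) (fun h => hhl h.symm),
        glue_eq_zero (by rw [head?_flatten_replicate hDne ha, hlast]; exact fun h => hhl h.symm)]
      omega
    · rw [List.getLast?_append, getLast?_flatten_replicate hDne ha]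
      cases h : D.getLast? with
      | none => rw [List.getLast?_eq_none_iff] at h; exact absurd h hDne
      | some d => rfl
  have hglue : glue (U ++ (List.replicate a D).flatten) P = 0 := by
    apply glue_eq_zero
    rw [key.2]
    cases P with
    | nil => simpa using hDne
    | cons c t =>
        have hhd : D.head? = some c := by
          rcases hP with ⟨s, hs⟩
          rw [← hs]; rfl
        intro hc
        have : D.head? = D.getLast? := by rw [hhd, hc]; rfl
        exact hhl this
  rw [p11_append, key.1, p11_nodup (hP.sublist.nodup hD), hglue]
  omega

-- tail contributes nothing
theorem p11_core_tail (Cf Tf : List α) (hT : pattern11Count Tf = 0) (hTne : Tf ≠ [])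
    (hTglue : Tf.getLast? ≠ Tf.head?) (hCglue : Cf.getLast? ≠ Tf.head?) (n : ℕ) :
    pattern11Count (Cf ++ (List.replicate n Tf).flatten) = pattern11Count Cf := by
  rw [p11_append, p11_flatten_replicate_zero hT hTglue]
  cases n with
  | zero => simp [glue_nil_right]
  | succ n =>
      rw [glue_eq_zero (by rw [head?_flatten_replicate hTne (Nat.succ_ne_zero n)]; exact hCglue)]
      omega

theorem two_elem_list {f : List α} (hn : f.Nodup) {u v : α} (huv : u ≠ v)
    (hu : u ∈ f) (hv : v ∈ f) (hmem : ∀ c ∈ f, c = u ∨ c = v) :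
    f = [u, v] ∨ f = [v, u] := by
  match f with
  | [] => simp at hu
  | [c] =>
      simp at hu hv
      exact absurd (hu.trans hv.symm) huv
  | c :: d :: t =>
      have hcd : c ≠ d := by simp at hn; tauto
      have hc := hmem c (by simp)
      have hd := hmem d (by simp)
      have ht : t = [] := by
        cases t with
        | nil => rfl
        | cons e t' =>
            have he := hmem e (by simp)
            have hec : e ≠ c := by simp at hn; tauto
            have hed : e ≠ d := by simp at hn; tauto
            rcases hc with rfl | rfl <;> rcases hd with rfl | rfl <;>
              rcases he with rfl | rfl <;> simp_all
      subst ht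
      rcases hc with rfl | rfl <;> rcases hd with rfl | rfl <;> simp_all

theorem single_elem_list {f : List α} (hn : f.Nodup) {u : α}
    (hu : u ∈ f) (hmem : ∀ c ∈ f, c = u) : f = [u] := by
  match f with
  | [] => simp at hu
  | c :: t =>
      have hc := hmem c (by simp)
      subst hc
      have ht : t = [] := by
        cases t with
        | nil => rfl
        | cons e t' =>
            have he := hmem e (by simp)
            simp [he] at hn
      simp [ht]

theorem takeWhile_ne_decomp {z : α} : ∀ {l : List α}, z ∈ l →
    l = l.takeWhile (fun c => decide (c ≠ z)) ++ z :: (l.dropWhile (fun c => decide (c ≠ z))).tail := by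
  intro l hz
  induction l with
  | nil => simp at hz
  | cons a l ih =>
      by_cases haz : a = z
      · subst haz
        rw [List.takeWhile_cons_of_neg (by simp), List.dropWhile_cons_of_neg (by simp)]
        simp
      · have hzl : z ∈ l := (List.mem_cons.1 hz).resolve_left (fun h => haz h.symm)
        rw [List.takeWhile_cons_of_pos (by simp [haz]), List.dropWhile_cons_of_pos (by simp [haz])]
        rw [List.cons_append]
        exact congrArg (a :: ·) (ih hzl)

-- the merge function
def mergeZ (z : α) : List α → List α → List α
  | [], ys => ys
  | a :: xs, ys =>
    if a = z then
      ys.takeWhile (fun c => decide (c ≠ z)) ++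
        z :: mergeZ z xs ((ys.dropWhile (fun c => decide (c ≠ z))).tail)
    else a :: mergeZ z xs ys

theorem mergeZ_nil (z : α) (ys : List α) : mergeZ z [] ys = ys := rfl

theorem mergeZ_cons_z (z : α) (xs ys : List α) :
    mergeZ z (z :: xs) ys = ys.takeWhile (fun c => decide (c ≠ z)) ++
      z :: mergeZ z xs ((ys.dropWhile (fun c => decide (c ≠ z))).tail) := by
  rw [mergeZ, if_pos rfl]

theorem mergeZ_cons_ne (z a : α) (xs ys : List α) (h : a ≠ z) :
    mergeZ z (a :: xs) ys = a :: mergeZ z xs ys := by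
  rw [mergeZ, if_neg h]

theorem mem_mergeZ (z : α) : ∀ (xs ys : List α) (c : α), c ∈ xs ∨ c ∈ ys → c ∈ mergeZ z xs ys
  | [], ys, c, h => by rw [mergeZ_nil]; rcases h with h | h; simp at h; exact h
  | a :: xs, ys, c, h => by
      by_cases haz : a = z
      · rw [haz] at h ⊢
        rw [mergeZ_cons_z]
        rcases h with h | h
        · rcases List.mem_cons.1 h with rfl | h
          · simp
          · simp only [List.mem_append, List.mem_cons]
            exact Or.inr (Or.inr (mem_mergeZ z xs _ c (Or.inl h)))
        · by_cases hzy : z ∈ ys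
          · conv at h => rw [takeWhile_ne_decomp hzy]
            simp only [List.mem_append, List.mem_cons] at h ⊢
            rcases h with h | rfl | h
            · exact Or.inl h
            · exact Or.inr (Or.inl rfl)
            · exact Or.inr (Or.inr (mem_mergeZ z xs _ c (Or.inr h)))
          · have : ys.takeWhile (fun c => decide (c ≠ z)) = ys := by
              have hd : ys.dropWhile (fun c => decide (c ≠ z)) = [] :=
                List.dropWhile_eq_nil_iff.2 (fun x hx => by simp; intro he; exact hzy (he ▸ hx))
              have := List.takeWhile_append_dropWhile (l := ys) (p := fun c => decide (c ≠ z))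
              rw [hd, List.append_nil] at this
              exact this
            rw [this]
            simp [h]
      · rw [mergeZ_cons_ne z a xs ys haz]
        rcases h with h | h
        · rcases List.mem_cons.1 h with rfl | h
          · simp
          · exact List.mem_cons.2 (Or.inr (mem_mergeZ z xs ys c (Or.inl h)))
        · exact List.mem_cons.2 (Or.inr (mem_mergeZ z xs ys c (Or.inr h)))

theorem dropWhile_ne_of_not_mem {z : α} {ys : List α} (h : z ∉ ys) :
    ys.dropWhile (fun c => decide (c ≠ z)) = [] :=
  List.dropWhile_eq_nil_iff.2 (fun x hx => by simp; intro he; exact h (he ▸ hx))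

theorem takeWhile_ne_of_not_mem {z : α} {ys : List α} (h : z ∉ ys) :
    ys.takeWhile (fun c => decide (c ≠ z)) = ys := by
  have hd := dropWhile_ne_of_not_mem h
  have := List.takeWhile_append_dropWhile (l := ys) (p := fun c => decide (c ≠ z))
  rw [hd, List.append_nil] at this
  exact this

theorem not_mem_takeWhile_ne (z : α) (ys : List α) :
    z ∉ ys.takeWhile (fun c => decide (c ≠ z)) := by
  intro h
  have := List.mem_takeWhile_imp h
  simp at this

theorem mem_of_mem_takeWhile {p : α → Bool} {ys : List α} {c : α}
    (h : c ∈ ys.takeWhile p) : c ∈ ys := (List.takeWhile_prefix p).subset h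

theorem mem_of_mem_tail_dropWhile {p : α → Bool} {ys : List α} {c : α}
    (h : c ∈ (ys.dropWhile p).tail) : c ∈ ys :=
  (List.dropWhile_suffix p).subset ((List.tail_suffix _).subset h)

theorem count_tail_dropWhile_ne {z : α} {ys : List α} (h : z ∈ ys) :
    ((ys.dropWhile (fun c => decide (c ≠ z))).tail).count z + 1 = ys.count z := by
  conv_rhs => rw [takeWhile_ne_decomp h]
  rw [List.count_append, List.count_cons]
  have h0 : (ys.takeWhile (fun c => decide (c ≠ z))).count z = 0 :=
    List.count_eq_zero.2 (not_mem_takeWhile_ne z ys)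
  simp only [ne_eq, decide_not] at h0 ⊢
  simp [h0]

theorem mergeZ_filter_left (z : α) (p : α → Bool) :
    ∀ (xs ys : List α), (∀ c ∈ ys, p c = true → c = z) → ys.count z ≤ xs.count z →
      (mergeZ z xs ys).filter p = xs.filter p
  | [], ys, h, hc => by
      rw [mergeZ_nil]
      have hz : z ∉ ys := by
        intro hm
        have := List.count_pos_iff.2 hm
        simp at hc
        omega
      simp only [List.filter_nil]
      exact List.filter_eq_nil_iff.2 (fun c hcy hpc => hz ((h c hcy hpc) ▸ hcy))
  | a :: xs, ys, h, hc => by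
      by_cases haz : a = z
      · rw [haz] at hc ⊢
        rw [mergeZ_cons_z, List.filter_append]
        have htk : (ys.takeWhile (fun c => decide (c ≠ z))).filter p = [] :=
          List.filter_eq_nil_iff.2 (fun c hcy hpc => by
            have h1 := h c (mem_of_mem_takeWhile hcy) hpc
            have h2 := List.mem_takeWhile_imp hcy
            simp [h1] at h2)
        rw [htk, List.nil_append, List.filter_cons, List.filter_cons]
        have ih : (mergeZ z xs ((ys.dropWhile (fun c => decide (c ≠ z))).tail)).filter p
            = xs.filter p := by
          apply mergeZ_filter_left z p xs _
          · exact fun c hcy hpc => h c (mem_of_mem_tail_dropWhile hcy) hpc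
          · by_cases hzy : z ∈ ys
            · have := count_tail_dropWhile_ne hzy
              rw [List.count_cons_self] at hc
              omega
            · rw [dropWhile_ne_of_not_mem hzy]
              simp
        rw [ih]
      · rw [mergeZ_cons_ne z a xs ys haz, List.filter_cons, List.filter_cons]
        have ih : (mergeZ z xs ys).filter p = xs.filter p := by
          apply mergeZ_filter_left z p xs ys h
          rwa [List.count_cons_of_ne haz] at hc
        rw [ih]

theorem mergeZ_filter_right (z : α) (p : α → Bool) :
    ∀ (xs ys : List α), (∀ c ∈ xs, p c = true → c = z) → xs.count z ≤ ys.count z →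
      (mergeZ z xs ys).filter p = ys.filter p
  | [], ys, _, _ => by rw [mergeZ_nil]
  | a :: xs, ys, h, hc => by
      by_cases haz : a = z
      · rw [haz] at hc ⊢
        have hzy : z ∈ ys := by
          rw [List.count_cons_self] at hc
          exact List.count_pos_iff.1 (by omega)
        rw [mergeZ_cons_z, List.filter_append]
        conv_rhs => rw [takeWhile_ne_decomp hzy]
        rw [List.filter_append, List.filter_cons, List.filter_cons]
        have ih : (mergeZ z xs ((ys.dropWhile (fun c => decide (c ≠ z))).tail)).filter p
            = ((ys.dropWhile (fun c => decide (c ≠ z))).tail).filter p := by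
          apply mergeZ_filter_right z p xs _
          · exact fun c hcy hpc => h c (List.mem_cons.2 (Or.inr hcy)) hpc
          · have := count_tail_dropWhile_ne hzy
            rw [List.count_cons_self] at hc
            omega
        rw [ih]
      · have hpa : p a = false := by
          cases hpa : p a with
          | false => rfl
          | true => exact absurd (h a (by simp) hpa) haz
        rw [mergeZ_cons_ne z a xs ys haz, List.filter_cons, hpa]
        simp only [ite_false, Bool.false_eq_true]
        apply mergeZ_filter_right z p xs ys
        · exact fun c hcy hpc => h c (List.mem_cons.2 (Or.inr hcy)) hpc
        · rwa [List.count_cons_of_ne haz] at hc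

theorem p11_four {c d : α} (h : c ≠ d) :
    pattern11Count [c, d, c, d] = 0 := by
  simp [pattern11Count, List.countP_cons, h, h.symm]

theorem p11_xxyy {x y : α} (h : x ≠ y) :
    pattern11Count [x, x, y, y] = 2 := by
  simp [pattern11Count, List.countP_cons, h, h.symm]

theorem filter_map_val {S : Set α} (w : List S) (x y : S) :
    (w.map Subtype.val).filter (fun a => decide (a = x.val ∨ a = y.val)) =
      (w.filter (fun b => decide (b = x ∨ b = y))).map Subtype.val := by
  induction w with
  | nil => rfl
  | cons b t ih =>
      simp only [List.map_cons, List.filter_cons]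
      have hd : (decide ((b : α) = x.val ∨ (b : α) = y.val)) = (decide (b = x ∨ b = y)) := by
        apply decide_eq_decide.mpr
        constructor
        · intro h
          rcases h with h | h
          · exact Or.inl (Subtype.ext h)
          · exact Or.inr (Subtype.ext h)
        · intro h
          rcases h with rfl | rfl
          · exact Or.inl rfl
          · exact Or.inr rfl
      rw [hd]
      cases hb : decide (b = x ∨ b = y) with
      | false =>
          rw [if_neg (by simp), if_neg (by simp)]
          exact ih
      | true =>
          rw [if_pos rfl, if_pos rfl, List.map_cons, ih]

theorem glue_main {V : Type*} [DecidableEq V] (k : ℕ) (G : SimpleGraph V) (V₁ V₂ : Set V) (z : V)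
    (hunion : V₁ ∪ V₂ = Set.univ) (hinter : V₁ ∩ V₂ = {z})
    (hsep : ∀ a ∈ V₁, ∀ b ∈ V₂, a ≠ z → b ≠ z → ¬ G.Adj a b)
    (v₁ v₂ : List V)
    (h1mem : ∀ u ∈ V₁, u ∈ v₁) (h1sub : ∀ c ∈ v₁, c ∈ V₁)
    (h1adj : ∀ u v : V, u ∈ V₁ → v ∈ V₁ → u ≠ v →
      (G.Adj u v ↔ pattern11Count (v₁.filter (fun a => decide (a = u ∨ a = v))) ≤ k))
    (h2mem : ∀ u ∈ V₂, u ∈ v₂) (h2sub : ∀ c ∈ v₂, c ∈ V₂)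
    (h2adj : ∀ u v : V, u ∈ V₂ → v ∈ V₂ → u ≠ v →
      (G.Adj u v ↔ pattern11Count (v₂.filter (fun a => decide (a = u ∨ a = v))) ≤ k)) :
    K11Representable G k := by
  classical
  have hz12 : z ∈ V₁ ∩ V₂ := hinter ▸ rfl
  have hz1 : z ∈ V₁ := hz12.1
  have hz2 : z ∈ V₂ := hz12.2
  have honly : ∀ c : V, c ∈ V₁ → c ∈ V₂ → c = z := fun c h1 h2 => by
    have hc : c ∈ V₁ ∩ V₂ := ⟨h1, h2⟩
    rwa [hinter] at hc
  have hall : ∀ c : V, c ∈ V₁ ∨ c ∈ V₂ := fun c => by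
    have hc : c ∈ V₁ ∪ V₂ := by rw [hunion]; trivial
    exact hc
  have ppswap : ∀ u v : V,
      (fun c : V => decide (c = u ∨ c = v)) = (fun c : V => decide (c = v ∨ c = u)) := by
    intro u v; funext c; exact decide_eq_decide.mpr or_comm
  -- the two building words
  set s₁ := v₁.dedup with hs₁def
  set r₁ := s₁.takeWhile (fun c => decide (c ≠ z)) with hr₁def
  set q₁ := (s₁.dropWhile (fun c => decide (c ≠ z))).tail with hq₁def
  have hzv₁ : z ∈ v₁ := h1mem z hz1
  have hzs₁ : z ∈ s₁ := List.mem_dedup.2 hzv₁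
  have hs₁eq : s₁ = r₁ ++ z :: q₁ := takeWhile_ne_decomp hzs₁
  have hs₁nodup : s₁.Nodup := List.nodup_dedup v₁
  set s₂ := v₂.dedup with hs₂def
  set r₂ := s₂.takeWhile (fun c => decide (c ≠ z)) with hr₂def
  set q₂ := (s₂.dropWhile (fun c => decide (c ≠ z))).tail with hq₂def
  have hzv₂ : z ∈ v₂ := h2mem z hz2
  have hzs₂ : z ∈ s₂ := List.mem_dedup.2 hzv₂
  have hs₂eq : s₂ = r₂ ++ z :: q₂ := takeWhile_ne_decomp hzs₂
  have hs₂nodup : s₂.Nodup := List.nodup_dedup v₂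
  set F₁ := (List.replicate (v₂.count z + 1) s₁).flatten with hF₁def
  set F₂ := (List.replicate (v₁.count z + 2) s₂).flatten with hF₂def
  set w₁ := v₁ ++ F₁ ++ (r₁ ++ [z]) with hw₁def
  set w₂ := v₂ ++ F₂ ++ r₂ with hw₂def
  -- subset facts
  have hs₁sub : ∀ c ∈ s₁, c ∈ V₁ := fun c hc => h1sub c (List.mem_dedup.1 hc)
  have hs₂sub : ∀ c ∈ s₂, c ∈ V₂ := fun c hc => h2sub c (List.mem_dedup.1 hc)
  have hF₁sub : ∀ c ∈ F₁, c ∈ V₁ := by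
    intro c hc
    rw [hF₁def, List.mem_flatten] at hc
    obtain ⟨l, hl, hcl⟩ := hc
    rw [List.mem_replicate] at hl
    exact hs₁sub c (hl.2 ▸ hcl)
  have hF₂sub : ∀ c ∈ F₂, c ∈ V₂ := by
    intro c hc
    rw [hF₂def, List.mem_flatten] at hc
    obtain ⟨l, hl, hcl⟩ := hc
    rw [List.mem_replicate] at hl
    exact hs₂sub c (hl.2 ▸ hcl)
  have hw₁sub : ∀ c ∈ w₁, c ∈ V₁ := by
    intro c hc
    rw [hw₁def] at hc
    simp only [List.mem_append, List.mem_singleton] at hc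
    rcases hc with ((hc | hc) | (hc | hc))
    · exact h1sub c hc
    · exact hF₁sub c hc
    · exact hs₁sub c (mem_of_mem_takeWhile hc)
    · exact hc ▸ hz1
  have hw₂sub : ∀ c ∈ w₂, c ∈ V₂ := by
    intro c hc
    rw [hw₂def] at hc
    simp only [List.mem_append] at hc
    rcases hc with ((hc | hc) | hc)
    · exact h2sub c hc
    · exact hF₂sub c hc
    · exact hs₂sub c (mem_of_mem_takeWhile hc)
  -- z-count facts
  have hcnt₁ : s₁.count z = 1 := List.count_eq_one_of_mem hs₁nodup hzs₁
  have hcnt₂ : s₂.count z = 1 := List.count_eq_one_of_mem hs₂nodup hzs₂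
  have hcr₁ : r₁.count z = 0 := List.count_eq_zero.2 (not_mem_takeWhile_ne z s₁)
  have hcr₂ : r₂.count z = 0 := List.count_eq_zero.2 (not_mem_takeWhile_ne z s₂)
  have hw₁cnt : w₁.count z = v₁.count z + v₂.count z + 2 := by
    rw [hw₁def, List.count_append, List.count_append, List.count_append,
      hF₁def, count_flatten_replicate, hcnt₁, hcr₁]
    simp
    omega
  have hw₂cnt : w₂.count z = v₁.count z + v₂.count z + 2 := by
    rw [hw₂def, List.count_append, List.count_append,
      hF₂def, count_flatten_replicate, hcnt₂, hcr₂]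
    omega
  have hcnteq : w₂.count z = w₁.count z := by rw [hw₁cnt, hw₂cnt]
  -- the core word and the tail word
  set core := mergeZ z w₁ w₂ with hcoredef
  have hcoremem : ∀ c : V, c ∈ core := by
    intro c
    apply mem_mergeZ
    rcases hall c with h | h
    · exact Or.inl (by rw [hw₁def]; simp [h1mem c h])
    · exact Or.inr (by rw [hw₂def]; simp [h2mem c h])
  set s := core.dedup with hsdef
  have hsnodup : s.Nodup := List.nodup_dedup core
  have hsmem : ∀ c : V, c ∈ s := fun c => List.mem_dedup.2 (hcoremem c)
  set A := s.filter (fun c => decide (c ∈ V₁ ∧ c ≠ z)) with hAdef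
  set B := s.filter (fun c => decide (c ∈ V₂ ∧ c ≠ z)) with hBdef
  set T := A ++ [z] ++ A ++ B ++ [z] ++ B with hTdef
  set W := core ++ (List.replicate (k+1) T).flatten with hWdef
  -- general machinery
  have hml₁ : ∀ p : V → Bool, (∀ c, p c = true → c ∈ V₁) → core.filter p = w₁.filter p := by
    intro p hp
    apply mergeZ_filter_left
    · exact fun c hc hpc => honly c (hp c hpc) (hw₂sub c hc)
    · exact le_of_eq hcnteq
  have hml₂ : ∀ p : V → Bool, (∀ c, p c = true → c ∈ V₂) → core.filter p = w₂.filter p := by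
    intro p hp
    apply mergeZ_filter_right
    · exact fun c hc hpc => honly c (hw₁sub c hc) (hp c hpc)
    · exact le_of_eq hcnteq.symm
  have hlast_core : ∀ p : V → Bool, (core.filter p).getLast? = (s.filter p).getLast? := by
    intro p
    rw [hsdef, ← filter_dedup, getLast?_dedup]
  have hWfil : ∀ p : V → Bool,
      W.filter p = core.filter p ++ (List.replicate (k+1) (T.filter p)).flatten := by
    intro p
    rw [hWdef, List.filter_append, filter_flatten_replicate]
  -- exact count preservation for pairs inside V₁
  have key₁ : ∀ u v : V, u ∈ V₁ → v ∈ V₁ → u ≠ v →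
      pattern11Count (core.filter (fun c => decide (c = u ∨ c = v))) =
        pattern11Count (v₁.filter (fun c => decide (c = u ∨ c = v))) := by
    intro u v hu hv huv
    have hp1 : ∀ c : V, (decide (c = u ∨ c = v)) = true → c ∈ V₁ := by
      intro c hc
      simp only [decide_eq_true_eq] at hc
      rcases hc with rfl | rfl
      · exact hu
      · exact hv
    rw [hml₁ _ hp1]
    have hfil : w₁.filter (fun c => decide (c = u ∨ c = v)) =
        v₁.filter (fun c => decide (c = u ∨ c = v)) ++
          (List.replicate (v₂.count z + 1)
            (s₁.filter (fun c => decide (c = u ∨ c = v)))).flatten ++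
          (r₁ ++ [z]).filter (fun c => decide (c = u ∨ c = v)) := by
      rw [hw₁def, List.filter_append, List.filter_append, hF₁def, filter_flatten_replicate]
    rw [hfil]
    have hus : u ∈ s₁.filter (fun c => decide (c = u ∨ c = v)) :=
      List.mem_filter.2 ⟨List.mem_dedup.2 (h1mem u hu), by simp⟩
    have hvs : v ∈ s₁.filter (fun c => decide (c = u ∨ c = v)) :=
      List.mem_filter.2 ⟨List.mem_dedup.2 (h1mem v hv), by simp⟩
    have h2 : 2 ≤ (s₁.filter (fun c => decide (c = u ∨ c = v))).length := by
      rcases two_elem_list (hs₁nodup.filter _) huv hus hvs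
        (fun c hc => by simpa using (List.mem_filter.1 hc).2) with h | h <;> rw [h] <;> simp
    apply p11_safe
    · exact List.ne_nil_of_mem (List.mem_filter.2 ⟨h1mem u hu, by simp⟩)
    · exact hs₁nodup.filter _
    · exact h2
    · rw [hs₁def, ← filter_dedup, getLast?_dedup]
    · exact List.IsPrefix.filter _ ⟨q₁, by rw [hs₁eq]; simp⟩
    · omega
  -- exact count preservation for pairs inside V₂
  have key₂ : ∀ u v : V, u ∈ V₂ → v ∈ V₂ → u ≠ v →
      pattern11Count (core.filter (fun c => decide (c = u ∨ c = v))) =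
        pattern11Count (v₂.filter (fun c => decide (c = u ∨ c = v))) := by
    intro u v hu hv huv
    have hp2 : ∀ c : V, (decide (c = u ∨ c = v)) = true → c ∈ V₂ := by
      intro c hc
      simp only [decide_eq_true_eq] at hc
      rcases hc with rfl | rfl
      · exact hu
      · exact hv
    rw [hml₂ _ hp2]
    have hfil : w₂.filter (fun c => decide (c = u ∨ c = v)) =
        v₂.filter (fun c => decide (c = u ∨ c = v)) ++
          (List.replicate (v₁.count z + 2)
            (s₂.filter (fun c => decide (c = u ∨ c = v)))).flatten ++
          r₂.filter (fun c => decide (c = u ∨ c = v)) := by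
      rw [hw₂def, List.filter_append, List.filter_append, hF₂def, filter_flatten_replicate]
    rw [hfil]
    have hus : u ∈ s₂.filter (fun c => decide (c = u ∨ c = v)) :=
      List.mem_filter.2 ⟨List.mem_dedup.2 (h2mem u hu), by simp⟩
    have hvs : v ∈ s₂.filter (fun c => decide (c = u ∨ c = v)) :=
      List.mem_filter.2 ⟨List.mem_dedup.2 (h2mem v hv), by simp⟩
    have h2 : 2 ≤ (s₂.filter (fun c => decide (c = u ∨ c = v))).length := by
      rcases two_elem_list (hs₂nodup.filter _) huv hus hvs
        (fun c hc => by simpa using (List.mem_filter.1 hc).2) with h | h <;> rw [h] <;> simp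
    apply p11_safe
    · exact List.ne_nil_of_mem (List.mem_filter.2 ⟨h2mem u hu, by simp⟩)
    · exact hs₂nodup.filter _
    · exact h2
    · rw [hs₂def, ← filter_dedup, getLast?_dedup]
    · exact List.IsPrefix.filter _ (hr₂def ▸ List.takeWhile_prefix _)
    · omega
  -- helper membership characterizations for A, B
  have hAmem : ∀ c : V, c ∈ A ↔ (c ∈ V₁ ∧ c ≠ z) := by
    intro c
    rw [hAdef, List.mem_filter]
    simp [hsmem c]
  have hBmem : ∀ c : V, c ∈ B ↔ (c ∈ V₂ ∧ c ≠ z) := by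
    intro c
    rw [hBdef, List.mem_filter]
    simp [hsmem c]
  have hAnodup : A.Nodup := hAdef ▸ hsnodup.filter _
  have hBnodup : B.Nodup := hBdef ▸ hsnodup.filter _
  -- pairs within V₁, both different from z
  have main₁ : ∀ u v : V, u ∈ V₁ → v ∈ V₁ → u ≠ v → u ≠ z → v ≠ z →
      pattern11Count (W.filter (fun c => decide (c = u ∨ c = v))) =
        pattern11Count (v₁.filter (fun c => decide (c = u ∨ c = v))) := by
    intro u v hu hv huv huz hvz
    set p := (fun c : V => decide (c = u ∨ c = v)) with hpdef
    obtain ⟨c, d, hcd, hnecd⟩ : ∃ c d, s.filter p = [c, d] ∧ c ≠ d := by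
      rcases two_elem_list (hsnodup.filter p) huv
        (List.mem_filter.2 ⟨hsmem u, by simp [hpdef]⟩)
        (List.mem_filter.2 ⟨hsmem v, by simp [hpdef]⟩)
        (fun c hc => by simpa [hpdef] using (List.mem_filter.1 hc).2) with h | h
      · exact ⟨u, v, h, huv⟩
      · exact ⟨v, u, h, huv.symm⟩
    have hAf : A.filter p = s.filter p := by
      rw [hAdef, List.filter_filter]
      apply List.filter_congr
      intro e he
      cases hpc : p e with
      | false => simp [hpc]
      | true =>
          have he1 : e ∈ V₁ ∧ e ≠ z := by
            have : e = u ∨ e = v := by simpa [hpdef] using hpc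
            rcases this with rfl | rfl
            · exact ⟨hu, huz⟩
            · exact ⟨hv, hvz⟩
          simp [hpc, he1.1, he1.2]
    have hBf : B.filter p = [] := by
      apply List.filter_eq_nil_iff.2
      intro e he hpe
      have heB := (hBmem e).1 he
      have : e = u ∨ e = v := by simpa [hpdef] using hpe
      rcases this with rfl | rfl
      · exact heB.2 (honly e hu heB.1)
      · exact heB.2 (honly e hv heB.1)
    have hzf : List.filter p [z] = [] := by
      simp only [List.filter_cons, List.filter_nil]
      rw [if_neg]
      simp [hpdef]
      exact ⟨fun h => huz h.symm, fun h => hvz h.symm⟩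
    have hTf : T.filter p = [c, d, c, d] := by
      rw [hTdef]
      simp only [List.filter_append, hAf, hBf, hzf, hcd]
      simp
    have hclast : (core.filter p).getLast? = some d := by
      rw [hlast_core p, hcd]
      simp
    rw [hWfil p, hTf, p11_core_tail _ _ (p11_four hnecd) (by simp)
      (by simp; exact fun h => hnecd h.symm)
      (by rw [hclast]; simp; exact fun h => hnecd h.symm) (k+1)]
    exact key₁ u v hu hv huv
  -- pairs within V₂, both different from z
  have main₂ : ∀ u v : V, u ∈ V₂ → v ∈ V₂ → u ≠ v → u ≠ z → v ≠ z →
      pattern11Count (W.filter (fun c => decide (c = u ∨ c = v))) =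
        pattern11Count (v₂.filter (fun c => decide (c = u ∨ c = v))) := by
    intro u v hu hv huv huz hvz
    set p := (fun c : V => decide (c = u ∨ c = v)) with hpdef
    obtain ⟨c, d, hcd, hnecd⟩ : ∃ c d, s.filter p = [c, d] ∧ c ≠ d := by
      rcases two_elem_list (hsnodup.filter p) huv
        (List.mem_filter.2 ⟨hsmem u, by simp [hpdef]⟩)
        (List.mem_filter.2 ⟨hsmem v, by simp [hpdef]⟩)
        (fun c hc => by simpa [hpdef] using (List.mem_filter.1 hc).2) with h | h
      · exact ⟨u, v, h, huv⟩
      · exact ⟨v, u, h, huv.symm⟩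
    have hBf : B.filter p = s.filter p := by
      rw [hBdef, List.filter_filter]
      apply List.filter_congr
      intro e he
      cases hpc : p e with
      | false => simp [hpc]
      | true =>
          have he1 : e ∈ V₂ ∧ e ≠ z := by
            have : e = u ∨ e = v := by simpa [hpdef] using hpc
            rcases this with rfl | rfl
            · exact ⟨hu, huz⟩
            · exact ⟨hv, hvz⟩
          simp [hpc, he1.1, he1.2]
    have hAf : A.filter p = [] := by
      apply List.filter_eq_nil_iff.2
      intro e he hpe
      have heA := (hAmem e).1 he
      have : e = u ∨ e = v := by simpa [hpdef] using hpe
      rcases this with rfl | rfl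
      · exact heA.2 (honly e heA.1 hu)
      · exact heA.2 (honly e heA.1 hv)
    have hzf : List.filter p [z] = [] := by
      simp only [List.filter_cons, List.filter_nil]
      rw [if_neg]
      simp [hpdef]
      exact ⟨fun h => huz h.symm, fun h => hvz h.symm⟩
    have hTf : T.filter p = [c, d, c, d] := by
      rw [hTdef]
      simp only [List.filter_append, hAf, hBf, hzf, hcd]
      simp
    have hclast : (core.filter p).getLast? = some d := by
      rw [hlast_core p, hcd]
      simp
    rw [hWfil p, hTf, p11_core_tail _ _ (p11_four hnecd) (by simp)
      (by simp; exact fun h => hnecd h.symm)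
      (by rw [hclast]; simp; exact fun h => hnecd h.symm) (k+1)]
    exact key₂ u v hu hv huv
  -- pairs (u, z) with u in V₁
  have casez₁ : ∀ u : V, u ∈ V₁ → u ≠ z →
      pattern11Count (W.filter (fun c => decide (c = u ∨ c = z))) =
        pattern11Count (v₁.filter (fun c => decide (c = u ∨ c = z))) := by
    intro u hu huz
    set p := (fun c : V => decide (c = u ∨ c = z)) with hpdef
    have hp1 : ∀ c : V, p c = true → c ∈ V₁ := by
      intro c hc
      have : c = u ∨ c = z := by simpa [hpdef] using hc
      rcases this with rfl | rfl
      · exact hu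
      · exact hz1
    have hAf : A.filter p = [u] := by
      apply single_elem_list (hAnodup.filter p)
      · exact List.mem_filter.2 ⟨(hAmem u).2 ⟨hu, huz⟩, by simp [hpdef]⟩
      · intro e he
        obtain ⟨heA, hpe⟩ := List.mem_filter.1 he
        have heq : e = u ∨ e = z := by simpa [hpdef] using hpe
        rcases heq with rfl | rfl
        · rfl
        · exact absurd rfl ((hAmem e).1 heA).2
    have hBf : B.filter p = [] := by
      apply List.filter_eq_nil_iff.2
      intro e he hpe
      have heB := (hBmem e).1 he
      have : e = u ∨ e = z := by simpa [hpdef] using hpe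
      rcases this with rfl | rfl
      · exact huz (honly e hu heB.1)
      · exact heB.2 rfl
    have hzfz : List.filter p [z] = [z] := by
      simp only [List.filter_cons, List.filter_nil]
      rw [if_pos]
      simp [hpdef]
    have hTf : T.filter p = [u, z, u, z] := by
      rw [hTdef]
      simp only [List.filter_append, hAf, hBf, hzfz]
      simp
    have hclast : (core.filter p).getLast? = some z := by
      rw [hml₁ p hp1, hw₁def]
      simp only [List.filter_append, hzfz]
      rw [List.getLast?_append, List.getLast?_concat]
      rfl
    rw [hWfil p, hTf, p11_core_tail _ _ (p11_four huz) (by simp)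
      (by simp; exact fun h => huz h.symm)
      (by rw [hclast]; simp; exact fun h => huz h.symm) (k+1)]
    exact key₁ u z hu hz1 huz
  -- pairs (u, z) with u in V₂
  have casez₂ : ∀ u : V, u ∈ V₂ → u ≠ z →
      pattern11Count (W.filter (fun c => decide (c = u ∨ c = z))) =
        pattern11Count (v₂.filter (fun c => decide (c = u ∨ c = z))) := by
    intro u hu huz
    set p := (fun c : V => decide (c = u ∨ c = z)) with hpdef
    have hp2 : ∀ c : V, p c = true → c ∈ V₂ := by
      intro c hc
      have : c = u ∨ c = z := by simpa [hpdef] using hc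
      rcases this with rfl | rfl
      · exact hu
      · exact hz2
    have hBf : B.filter p = [u] := by
      apply single_elem_list (hBnodup.filter p)
      · exact List.mem_filter.2 ⟨(hBmem u).2 ⟨hu, huz⟩, by simp [hpdef]⟩
      · intro e he
        obtain ⟨heB, hpe⟩ := List.mem_filter.1 he
        have heq : e = u ∨ e = z := by simpa [hpdef] using hpe
        rcases heq with rfl | rfl
        · rfl
        · exact absurd rfl ((hBmem e).1 heB).2
    have hAf : A.filter p = [] := by
      apply List.filter_eq_nil_iff.2
      intro e he hpe
      have heA := (hAmem e).1 he
      have : e = u ∨ e = z := by simpa [hpdef] using hpe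
      rcases this with rfl | rfl
      · exact huz (honly e heA.1 hu)
      · exact heA.2 rfl
    have hzfz : List.filter p [z] = [z] := by
      simp only [List.filter_cons, List.filter_nil]
      rw [if_pos]
      simp [hpdef]
    have hTf : T.filter p = [z, u, z, u] := by
      rw [hTdef]
      simp only [List.filter_append, hAf, hBf, hzfz]
      simp
    -- nodup and z-freeness of q₂ ++ r₂
    have hnod : (r₂ ++ z :: q₂).Nodup := hs₂eq ▸ hs₂nodup
    have hdisj : List.Disjoint r₂ (z :: q₂) := by
      intro a ha hb; exact (List.nodup_append.1 hnod).2.2 a ha a hb rfl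
    have hq₂nodup : q₂.Nodup := (List.nodup_cons.1 (List.nodup_append.1 hnod).2.1).2
    have hr₂nodup : r₂.Nodup := (List.nodup_append.1 hnod).1
    have hzq₂ : z ∉ q₂ := (List.nodup_cons.1 (List.nodup_append.1 hnod).2.1).1
    have hzr₂ : z ∉ r₂ := fun h => hdisj h (by simp)
    have hqrnodup : (q₂ ++ r₂).Nodup := by
      rw [List.nodup_append]
      exact ⟨hq₂nodup, hr₂nodup, fun a ha b hb hab => by subst hab; exact hdisj hb (List.mem_cons.2 (Or.inr ha))⟩
    have huqr : u ∈ q₂ ++ r₂ := by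
      have : u ∈ s₂ := List.mem_dedup.2 (h2mem u hu)
      rw [hs₂eq] at this
      rcases List.mem_append.1 this with h | h
      · exact List.mem_append.2 (Or.inr h)
      · rcases List.mem_cons.1 h with rfl | h
        · exact absurd rfl huz
        · exact List.mem_append.2 (Or.inl h)
    have hqrf : (q₂ ++ r₂).filter p = [u] := by
      apply single_elem_list (hqrnodup.filter p)
      · exact List.mem_filter.2 ⟨huqr, by simp [hpdef]⟩
      · intro e he
        obtain ⟨heqr, hpe⟩ := List.mem_filter.1 he
        have heq : e = u ∨ e = z := by simpa [hpdef] using hpe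
        rcases heq with rfl | rfl
        · rfl
        · rcases List.mem_append.1 heqr with h | h
          · exact absurd h hzq₂
          · exact absurd h hzr₂
    have hw₂eq : w₂ = (v₂ ++ (List.replicate (v₁.count z + 1) s₂).flatten ++ r₂) ++
        z :: (q₂ ++ r₂) := by
      rw [hw₂def, hF₂def]
      have h2eq : List.count z v₁ + 2 = (List.count z v₁ + 1) + 1 := rfl
      rw [h2eq, List.replicate_succ', List.flatten_append]
      rw [show ([s₂] : List (List V)).flatten = r₂ ++ z :: q₂ by simp [hs₂eq]]
      simp [List.append_assoc]
    have hclast : (core.filter p).getLast? = some u := by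
      rw [hml₂ p hp2, hw₂eq, List.filter_append,
        List.filter_cons_of_pos (by simp [hpdef]), hqrf]
      rw [List.getLast?_append]
      rfl
    rw [hWfil p, hTf, p11_core_tail _ _ (p11_four (fun h => huz h.symm)) (by simp)
      (by simp; exact huz)
      (by rw [hclast]; simp; exact huz) (k+1)]
    exact key₂ u z hu hz2 huz
  -- crossing pairs
  have crossing : ∀ u v : V, u ∈ V₁ → v ∈ V₂ → u ≠ z → v ≠ z →
      k < pattern11Count (W.filter (fun c => decide (c = u ∨ c = v))) := by
    intro u v hu hv huz hvz
    have huv : u ≠ v := fun h => huz (honly u hu (h ▸ hv))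
    set p := (fun c : V => decide (c = u ∨ c = v)) with hpdef
    have hAf : A.filter p = [u] := by
      apply single_elem_list (hAnodup.filter p)
      · exact List.mem_filter.2 ⟨(hAmem u).2 ⟨hu, huz⟩, by simp [hpdef]⟩
      · intro e he
        obtain ⟨heA, hpe⟩ := List.mem_filter.1 he
        have heq : e = u ∨ e = v := by simpa [hpdef] using hpe
        rcases heq with rfl | rfl
        · rfl
        · exact absurd (honly e ((hAmem e).1 heA).1 hv) ((hAmem e).1 heA).2
    have hBf : B.filter p = [v] := by
      apply single_elem_list (hBnodup.filter p)
      · exact List.mem_filter.2 ⟨(hBmem v).2 ⟨hv, hvz⟩, by simp [hpdef]⟩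
      · intro e he
        obtain ⟨heB, hpe⟩ := List.mem_filter.1 he
        have heq : e = u ∨ e = v := by simpa [hpdef] using hpe
        rcases heq with rfl | rfl
        · exact absurd (honly e hu ((hBmem e).1 heB).1) ((hBmem e).1 heB).2
        · rfl
    have hzf : List.filter p [z] = [] := by
      simp only [List.filter_cons, List.filter_nil]
      rw [if_neg]
      simp [hpdef]
      exact ⟨fun h => huz h.symm, fun h => hvz h.symm⟩
    have hTf : T.filter p = [u, u, v, v] := by
      rw [hTdef]
      simp only [List.filter_append, hAf, hBf, hzf]
      simp
    have hge : (k+1) * 2 ≤ pattern11Count (W.filter p) := by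
      rw [hWfil p, hTf]
      calc (k+1) * 2 = (k+1) * pattern11Count [u, u, v, v] := by rw [p11_xxyy huv]
      _ ≤ pattern11Count ((List.replicate (k+1) [u, u, v, v]).flatten) :=
          p11_flatten_replicate_ge _ _
      _ ≤ _ := by
          have := le_p11_append (core.filter p)
            ((List.replicate (k+1) [u, u, v, v]).flatten)
          omega
    omega
  -- pairs within V₁ (including z)
  have within₁ : ∀ u v : V, u ∈ V₁ → v ∈ V₁ → u ≠ v →
      pattern11Count (W.filter (fun c => decide (c = u ∨ c = v))) =
        pattern11Count (v₁.filter (fun c => decide (c = u ∨ c = v))) := by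
    intro u v hu hv huv
    by_cases huz : u = z
    · have hvz : v ≠ z := fun h => huv (h ▸ huz ▸ rfl)
      rw [huz, ppswap z v]
      exact casez₁ v hv hvz
    · by_cases hvz : v = z
      · rw [hvz]
        exact casez₁ u hu huz
      · exact main₁ u v hu hv huv huz hvz
  have within₂ : ∀ u v : V, u ∈ V₂ → v ∈ V₂ → u ≠ v →
      pattern11Count (W.filter (fun c => decide (c = u ∨ c = v))) =
        pattern11Count (v₂.filter (fun c => decide (c = u ∨ c = v))) := by
    intro u v hu hv huv
    by_cases huz : u = z
    · have hvz : v ≠ z := fun h => huv (h ▸ huz ▸ rfl)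
      rw [huz, ppswap z v]
      exact casez₂ v hv hvz
    · by_cases hvz : v = z
      · rw [hvz]
        exact casez₂ u hu huz
      · exact main₂ u v hu hv huv huz hvz
  -- assemble
  refine ⟨W, fun c => by rw [hWdef]; exact List.mem_append_left _ (hcoremem c), ?_⟩
  intro x y hxy
  by_cases hx1 : x ∈ V₁ <;> by_cases hy1 : y ∈ V₁
  · rw [within₁ x y hx1 hy1 hxy]
    exact h1adj x y hx1 hy1 hxy
  · have hy2 : y ∈ V₂ := (hall y).resolve_left hy1
    have hyz : y ≠ z := fun h => hy1 (h ▸ hz1)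
    by_cases hxz : x = z
    · rw [within₂ x y (hxz ▸ hz2) hy2 hxy]
      exact h2adj x y (hxz ▸ hz2) hy2 hxy
    · have hc := crossing x y hx1 hy2 hxz hyz
      exact iff_of_false (hsep x hx1 y hy2 hxz hyz) (by omega)
  · have hx2 : x ∈ V₂ := (hall x).resolve_left hx1
    have hxz : x ≠ z := fun h => hx1 (h ▸ hz1)
    by_cases hyz : y = z
    · rw [within₂ x y hx2 (hyz ▸ hz2) hxy]
      exact h2adj x y hx2 (hyz ▸ hz2) hxy
    · have hc := crossing y x hy1 hx2 hyz hxz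
      rw [ppswap x y]
      exact iff_of_false (fun h => hsep y hy1 x hx2 hyz hxz h.symm) (by omega)
  · have hx2 : x ∈ V₂ := (hall x).resolve_left hx1
    have hy2 : y ∈ V₂ := (hall y).resolve_left hy1
    rw [within₂ x y hx2 hy2 hxy]
    exact h2adj x y hx2 hy2 hxy

end K11Glue

/-- glueing two `k`-11-representable graphs at a single vertex yields a
`k`-11-representable graph. -/
theorem k11Representable_glue_vertex {V : Type*} [DecidableEq V] [Fintype V] (k : ℕ)
    (G : SimpleGraph V) (V₁ V₂ : Set V) (z : V)
    (hunion : V₁ ∪ V₂ = Set.univ) (hinter : V₁ ∩ V₂ = {z})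
    (hsep : ∀ a ∈ V₁, ∀ b ∈ V₂, a ≠ z → b ≠ z → ¬ G.Adj a b)
    (h1 : K11Representable (G.induce V₁) k) (h2 : K11Representable (G.induce V₂) k) :
    K11Representable G k := by
  classical
  obtain ⟨u₁, hu₁mem, hu₁adj⟩ := h1
  obtain ⟨u₂, hu₂mem, hu₂adj⟩ := h2
  apply K11Glue.glue_main k G V₁ V₂ z hunion hinter hsep
    (u₁.map Subtype.val) (u₂.map Subtype.val)
  · intro u hu
    exact List.mem_map.2 ⟨⟨u, hu⟩, hu₁mem ⟨u, hu⟩, rfl⟩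
  · intro c hc
    obtain ⟨b, _, rfl⟩ := List.mem_map.1 hc
    exact b.2
  · intro u v hu hv huv
    have hne : (⟨u, hu⟩ : V₁) ≠ ⟨v, hv⟩ := fun h => huv (congrArg Subtype.val h)
    have hpair := hu₁adj ⟨u, hu⟩ ⟨v, hv⟩ hne
    have hadj : (G.induce V₁).Adj ⟨u, hu⟩ ⟨v, hv⟩ ↔ G.Adj u v := Iff.rfl
    rw [K11Glue.filter_map_val u₁ ⟨u, hu⟩ ⟨v, hv⟩,
      K11Glue.p11_map Subtype.val Subtype.val_injective]
    exact hadj.symm.trans hpair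
  · intro u hu
    exact List.mem_map.2 ⟨⟨u, hu⟩, hu₂mem ⟨u, hu⟩, rfl⟩
  · intro c hc
    obtain ⟨b, _, rfl⟩ := List.mem_map.1 hc
    exact b.2
  · intro u v hu hv huv
    have hne : (⟨u, hu⟩ : V₂) ≠ ⟨v, hv⟩ := fun h => huv (congrArg Subtype.val h)
    have hpair := hu₂adj ⟨u, hu⟩ ⟨v, hv⟩ hne
    have hadj : (G.induce V₂).Adj ⟨u, hu⟩ ⟨v, hv⟩ ↔ G.Adj u v := Iff.rfl
    rw [K11Glue.filter_map_val u₂ ⟨u, hu⟩ ⟨v, hv⟩,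
      K11Glue.p11_map Subtype.val Subtype.val_injective]
    exact hadj.symm.trans hpair
end
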